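/- arXiv:2309.07089 — 3 statements merged into one kernel-verified Lean document; each statement's English description precedes it below -/
import Mathlib

section
/- Let G be a vertex-transitive simple graph on n > 3 vertices (for any two vertices u, v there is a graph automorphism of G sending u to v). If 2·α(G∖i) ≥ α(G) for some vertex i of G, then α(F_2(G)) = α(G). -/
open Finset Polynomial Real Matrix

noncomputable section

/-- The `k`-token graph of a simple graph `G`. -/
def tokenGraph {V : Type*} [DecidableEq V] (G : SimpleGraph V) (k : ℕ) :
    SimpleGraph {s : Finset V // s.card = k} where
  Adj A B := ∃ a b, G.Adj a b ∧ a ∈ A.1 ∧ b ∈ B.1 ∧ symmDiff A.1 B.1 = {a, b}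
  symm := by
    constructor
    rintro A B ⟨a, b, hab, ha, hb, hd⟩
    exact ⟨b, a, hab.symm, hb, ha, by rw [symmDiff_comm, hd, Finset.pair_comm]⟩
  loopless := by
    constructor
    rintro A ⟨a, b, hab, ha, hb, hd⟩
    rw [symmDiff_self, Finset.bot_eq_empty] at hd
    exact (Finset.insert_ne_empty a {b}) hd.symm

/-- The Laplacian matrix (over ℝ) of a finite simple graph. -/
def lapMat {V : Type*} [Fintype V] [DecidableEq V] (G : SimpleGraph V) : Matrix V V ℝ :=
  letI := Classical.decRel G.Adj
  G.lapMatrix ℝ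

/-- The Laplacian matrix (over ℂ) of a finite simple graph. -/
def lapMatC {V : Type*} [Fintype V] [DecidableEq V] (G : SimpleGraph V) : Matrix V V ℂ :=
  letI := Classical.decRel G.Adj
  G.lapMatrix ℂ

/-- The Laplacian eigenvalues of `G`, with multiplicity, in nondecreasing order. -/
def lapSpec {V : Type*} [Fintype V] [DecidableEq V] (G : SimpleGraph V) : List ℝ :=
  ((lapMat G).charpoly.roots).sort (· ≤ ·)

/-- The algebraic connectivity: the second-smallest Laplacian eigenvalue. -/
def algConn {V : Type*} [Fintype V] [DecidableEq V] (G : SimpleGraph V) : ℝ :=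
  (lapSpec G).getD 1 0

/-- The largest Laplacian eigenvalue (Laplacian spectral radius). -/
def lapSpecRadius {V : Type*} [Fintype V] [DecidableEq V] (G : SimpleGraph V) : ℝ :=
  (lapSpec G).getLastD 0

/-- `μ` is an eigenvalue of the Laplacian matrix of `G`. -/
def IsLapEigen {V : Type*} [Fintype V] [DecidableEq V] (G : SimpleGraph V) (μ : ℝ) : Prop :=
  ∃ v : V → ℝ, v ≠ 0 ∧ (lapMat G).mulVec v = μ • v

/-- The induced subgraph of `G` on the complement of the vertex `i` (i.e. `G ∖ i`). -/
def deleteVert {V : Type*} (G : SimpleGraph V) (i : V) : SimpleGraph {v : V // v ≠ i} :=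
  SimpleGraph.comap Subtype.val G

/-- The cycle graph on `ℤ/nℤ`, where `i` is adjacent to `i ± 1`. -/
def cycleG (n : ℕ) : SimpleGraph (ZMod n) where
  Adj x y := x ≠ y ∧ (x - y = 1 ∨ y - x = 1)
  symm := by constructor; rintro x y ⟨hxy, h⟩; exact ⟨hxy.symm, h.symm⟩
  loopless := by constructor; rintro x ⟨hx, _⟩; exact hx rfl

/-- The inclusion matrix from `h`-subsets to `k`-subsets: rows indexed by `k`-subsets `A`,
columns by `h`-subsets `X`, with entry `1` if `X ⊆ A` and `0` otherwise. -/
def inclMatrix (V : Type*) [Fintype V] [DecidableEq V] (h k : ℕ) :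
    Matrix {s : Finset V // s.card = k} {s : Finset V // s.card = h} ℝ :=
  fun A X => if X.1 ⊆ A.1 then 1 else 0

/-- The `(n;k)`-binomial matrix: rows indexed by `k`-subsets `A`, columns by vertices `j`,
with entry `1` if `j ∈ A` and `0` otherwise. -/
def binomMatrix (V : Type*) [Fintype V] [DecidableEq V] (k : ℕ) :
    Matrix {s : Finset V // s.card = k} V ℝ :=
  fun A j => if j ∈ A.1 then 1 else 0

/-- The Kneser graph `K(n,k)`. -/
def kneserGraph (n k : ℕ) : SimpleGraph {s : Finset (Fin n) // s.card = k} where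
  Adj A B := A ≠ B ∧ Disjoint A.1 B.1
  symm := by constructor; rintro A B ⟨h1, h2⟩; exact ⟨h1.symm, h2.symm⟩
  loopless := by constructor; rintro A ⟨h1, _⟩; exact h1 rfl

end


open Finset Polynomial Real Matrix

noncomputable section

/-- second smallest root of the characteristic polynomial -/
def sndEig {W : Type*} [Fintype W] [DecidableEq W] (M : Matrix W W ℝ) : ℝ :=
  ((M.charpoly.roots).sort (· ≤ ·)).getD 1 0

section CharpolyConj

variable {W : Type*} [Fintype W] [DecidableEq W] {R : Type*} [CommRing R]

lemma charpoly_conj (P A Q : Matrix W W R) (hPQ : P * Q = 1) :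
    (P * A * Q).charpoly = A.charpoly := by
  classical
  set f : Matrix W W R →+* Matrix W W R[X] := (Polynomial.C : R →+* R[X]).mapMatrix with hf
  have hfPQ : (f P) * (f Q) = 1 := by
    rw [← _root_.map_mul, hPQ, _root_.map_one]
  have key : charmatrix (P * A * Q) = f P * charmatrix A * f Q := by
    unfold charmatrix
    rw [Matrix.mul_sub, Matrix.sub_mul]
    congr 1
    · have hc : Commute (Matrix.scalar W (X : R[X])) (f P) :=
        Matrix.scalar_commute _ (fun r => Commute.all _ _) _
      symm
      calc f P * Matrix.scalar W (X : R[X]) * f Q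
          = Matrix.scalar W (X : R[X]) * (f P * f Q) := by
            rw [← hc.eq, mul_assoc]
        _ = Matrix.scalar W (X : R[X]) := by rw [hfPQ, mul_one]
    · simp only [hf, RingHom.mapMatrix_apply, ← Matrix.map_mul]
  show (charmatrix (P * A * Q)).det = (charmatrix A).det
  rw [key, det_mul, det_mul]
  calc (f P).det * (charmatrix A).det * (f Q).det
      = (charmatrix A).det * ((f P) * (f Q)).det := by rw [det_mul]; ring
    _ = (charmatrix A).det := by rw [hfPQ, det_one, mul_one]

lemma charpoly_diagonal (d : W → R) :
    (Matrix.diagonal d).charpoly = ∏ i, (X - Polynomial.C (d i)) := by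
  have key : charmatrix (Matrix.diagonal d) =
      Matrix.diagonal (fun i => X - Polynomial.C (d i)) := by
    apply Matrix.ext
    intro i j
    by_cases h : i = j
    · subst h
      rw [charmatrix_apply_eq, Matrix.diagonal_apply_eq, Matrix.diagonal_apply_eq]
    · rw [charmatrix_apply_ne _ _ _ h, Matrix.diagonal_apply_ne _ h,
        Matrix.diagonal_apply_ne _ h, map_zero, neg_zero]
  show (charmatrix (Matrix.diagonal d)).det = _
  rw [key, det_diagonal]

end CharpolyConj

section Spectral

variable {W : Type*} [Fintype W] [DecidableEq W]

omit [DecidableEq W] in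
lemma dotProduct_self_nonneg' (y : W → ℝ) : 0 ≤ y ⬝ᵥ y :=
  Finset.sum_nonneg fun i _ => mul_self_nonneg (y i)

omit [DecidableEq W] in
lemma dotProduct_self_pos' {y : W → ℝ} (hy : y ≠ 0) : 0 < y ⬝ᵥ y := by
  obtain ⟨i, hi⟩ := Function.ne_iff.mp hy
  have h1 : 0 < y i * y i := mul_self_pos.mpr (by simpa using hi)
  exact Finset.sum_pos' (fun j _ => mul_self_nonneg (y j)) ⟨i, Finset.mem_univ i, h1⟩

lemma spectral_package (M : Matrix W W ℝ) (hM : M.IsHermitian) :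
    ∃ (μ : W → ℝ) (U : Matrix W W ℝ),
      M.charpoly.roots = Multiset.map μ Finset.univ.val ∧
      (∀ y z : W → ℝ, y ⬝ᵥ z = (star U *ᵥ y) ⬝ᵥ (star U *ᵥ z)) ∧
      (∀ y : W → ℝ, star U *ᵥ (M *ᵥ y) = fun j => μ j * (star U *ᵥ y) j) ∧
      (∀ y : W → ℝ, U *ᵥ (star U *ᵥ y) = y) ∧
      (∀ c : W → ℝ, star U *ᵥ (U *ᵥ c) = c) := by
  classical
  set U : Matrix W W ℝ := (hM.eigenvectorUnitary : Matrix W W ℝ) with hU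
  have h1 : U * star U = 1 := Matrix.mem_unitaryGroup_iff.mp hM.eigenvectorUnitary.2
  have h2 : star U * U = 1 := Matrix.mem_unitaryGroup_iff'.mp hM.eigenvectorUnitary.2
  obtain ⟨μ, hμ⟩ : ∃ μ : W → ℝ, hM.eigenvalues = μ := ⟨_, rfl⟩
  have hspec : M = U * Matrix.diagonal μ * star U := by
    have := hM.spectral_theorem
    rwa [RCLike.ofReal_real_eq_id, Function.id_comp, hμ] at this
  have h4 : ∀ y : W → ℝ, U *ᵥ (star U *ᵥ y) = y := by
    intro y; rw [mulVec_mulVec, h1, one_mulVec]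
  have h5 : ∀ c : W → ℝ, star U *ᵥ (U *ᵥ c) = c := by
    intro c; rw [mulVec_mulVec, h2, one_mulVec]
  refine ⟨μ, U, ?_, ?_, ?_, h4, h5⟩
  · have hcp : M.charpoly = (Matrix.diagonal μ).charpoly := by
      conv_lhs => rw [hspec]
      exact charpoly_conj _ _ _ h1
    rw [hcp, _root_.charpoly_diagonal, Finset.prod_eq_multiset_prod,
      show (Multiset.map (fun i => X - Polynomial.C (μ i)) Finset.univ.val) =
        (Multiset.map (fun a => X - Polynomial.C a) (Multiset.map μ Finset.univ.val)) from by
          rw [Multiset.map_map]; rfl,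
      roots_multiset_prod_X_sub_C]
  · intro y z
    have hstep : (star U *ᵥ y) ⬝ᵥ (star U *ᵥ z) = ((star U *ᵥ y) ᵥ* star U) ⬝ᵥ z :=
      dotProduct_mulVec _ _ _
    have hT : star U = Uᵀ := by
      rw [Matrix.star_eq_conjTranspose, conjTranspose_eq_transpose_of_trivial]
    rw [hstep, hT, Matrix.vecMul_transpose, ← hT, h4]
  · intro y
    conv_lhs => rw [hspec]
    rw [← Matrix.mulVec_mulVec, ← Matrix.mulVec_mulVec, h5]
    ext j
    rw [Matrix.mulVec_diagonal]

end Spectral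

end
section ListAux

lemma sorted_aux {a b : ℝ} {t : List ℝ} (hs : (a :: b :: t).Pairwise (· ≤ ·))
    (h0 : (0:ℝ) ∈ a :: b :: t) (hnn : ∀ z ∈ a :: b :: t, 0 ≤ z) :
    a = 0 ∧ (∀ x ∈ a :: b :: t, x ≠ 0 → b ≤ x) ∧ (0 < b → (a :: b :: t).count 0 = 1) ∧
      (b = 0 → 2 ≤ (a :: b :: t).count 0) := by
  rw [List.pairwise_cons] at hs
  obtain ⟨ha, hs'⟩ := hs
  rw [List.pairwise_cons] at hs'
  obtain ⟨hb, _⟩ := hs'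
  have ha0 : a = 0 := by
    rcases List.mem_cons.mp h0 with h | h
    · exact h.symm
    · exact le_antisymm (ha 0 h) (hnn a List.mem_cons_self)
  refine ⟨ha0, ?_, ?_, ?_⟩
  · intro x hx hx0
    rcases List.mem_cons.mp hx with h | h
    · exact absurd (h ▸ ha0) hx0
    · rcases List.mem_cons.mp h with h | h
      · exact le_of_eq h.symm
      · exact le_trans (le_refl b) (hb x h)
  · intro hbpos
    have h1 : (0:ℝ) ∉ b :: t := by
      intro hmem
      rcases List.mem_cons.mp hmem with h | h
      · exact absurd h.symm (ne_of_gt hbpos)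
      · exact absurd (hb 0 h) (not_le.mpr hbpos)
    rw [List.count_cons, List.count_eq_zero.mpr h1]
    simp [ha0]
  · intro hb0
    have : (a :: b :: t).count 0 = (t.count 0) + 1 + 1 := by
      rw [List.count_cons, List.count_cons]
      simp [ha0, hb0]
    omega

end ListAux

section Variational

variable {W : Type*} [Fintype W] [DecidableEq W]

/-- The full spectral package for a PSD matrix with zero row sums. -/
lemma spectral_package' [Nonempty W] {M : Matrix W W ℝ} (hM : M.PosSemidef)
    (hone : M *ᵥ (fun _ => 1) = 0) :
    ∃ (μ : W → ℝ) (U : Matrix W W ℝ) (d : W → ℝ),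
      (∀ j, 0 ≤ μ j) ∧
      (∀ j, μ j ≠ 0 → d j = 0) ∧ (∃ j, d j ≠ 0) ∧
      (∀ y : W → ℝ, (∑ v, y v) = d ⬝ᵥ (star U *ᵥ y)) ∧
      (∀ y : W → ℝ, y ⬝ᵥ (M *ᵥ y) = ∑ j, μ j * ((star U *ᵥ y) j)^2) ∧
      (∀ y : W → ℝ, y ⬝ᵥ y = ∑ j, ((star U *ᵥ y) j)^2) ∧
      (∀ c : W → ℝ, star U *ᵥ (U *ᵥ c) = c) ∧
      M.charpoly.roots = Multiset.map μ Finset.univ.val ∧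
      (∀ (c : W → ℝ) (t : ℝ), (∀ j, μ j * c j = t * c j) →
        M *ᵥ (U *ᵥ c) = t • (U *ᵥ c)) := by
  obtain ⟨μ, U, hroots, hdot, hdiag, hUP, hPU⟩ := spectral_package M hM.1
  set d : W → ℝ := star U *ᵥ (fun _ => 1) with hd
  have hμd : ∀ j, μ j * d j = 0 := by
    intro j
    have h := hdiag (fun _ => 1)
    rw [hone, Matrix.mulVec_zero] at h
    exact (congrFun h.symm j).trans rfl
  have hQ : ∀ y : W → ℝ, y ⬝ᵥ (M *ᵥ y) = ∑ j, μ j * ((star U *ᵥ y) j)^2 := by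
    intro y
    rw [hdot y (M *ᵥ y), hdiag y]
    simp only [dotProduct]
    exact Finset.sum_congr rfl fun j _ => by ring
  have hN : ∀ y : W → ℝ, y ⬝ᵥ y = ∑ j, ((star U *ᵥ y) j)^2 := by
    intro y
    rw [hdot y y]
    simp only [dotProduct]
    exact Finset.sum_congr rfl fun j _ => by ring
  refine ⟨μ, U, d, ?_, ?_, ?_, ?_, hQ, hN, hPU, hroots, ?_⟩
  · intro j
    have hy := hM.dotProduct_mulVec_nonneg (U *ᵥ Pi.single j 1)
    rw [star_trivial] at hy
    have hc : star U *ᵥ (U *ᵥ Pi.single j 1) = Pi.single j 1 := hPU _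
    have := hQ (U *ᵥ Pi.single j 1)
    rw [hc] at this
    have hsum : ∑ i, μ i * ((Pi.single j 1 : W → ℝ) i)^2 = μ j := by
      rw [Finset.sum_eq_single j]
      · simp
      · intro i _ hij
        rw [Pi.single_eq_of_ne hij]
        ring
      · intro h; exact absurd (Finset.mem_univ j) h
    rw [this, hsum] at hy
    exact_mod_cast hy
  · intro j hj
    rcases mul_eq_zero.mp (hμd j) with h | h
    · exact absurd h hj
    · exact h
  · by_contra h
    push_neg at h
    have hdz : d = 0 := funext fun j => h j
    have : (fun _ => (1:ℝ)) = (0 : W → ℝ) := by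
      rw [← hUP (fun _ => 1), ← hd, hdz, Matrix.mulVec_zero]
    exact one_ne_zero (congrFun this (Classical.arbitrary W))
  · intro y
    have h1 : (fun _ => (1:ℝ)) ⬝ᵥ y = ∑ v, y v := by
      simp [dotProduct]
    rw [← h1, hdot (fun _ => 1) y, ← hd]
  · intro c t hct
    have h1 : star U *ᵥ (M *ᵥ (U *ᵥ c)) = t • c := by
      rw [hdiag, hPU]
      ext j
      exact (hct j).trans rfl
    calc M *ᵥ (U *ᵥ c) = U *ᵥ (star U *ᵥ (M *ᵥ (U *ᵥ c))) := (hUP _).symm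
      _ = U *ᵥ (t • c) := by rw [h1]
      _ = t • (U *ᵥ c) := Matrix.mulVec_smul _ _ _

end Variational
section ListAux2

lemma getD1_mem {l : List ℝ} (h : 2 ≤ l.length) : l.getD 1 0 ∈ l := by
  match l, h with
  | a :: b :: t, _ => exact List.mem_cons.mpr (Or.inr List.mem_cons_self)

lemma sorted_list_facts {l : List ℝ} (hsort : l.Pairwise (· ≤ ·)) (hnn : ∀ z ∈ l, 0 ≤ z)
    (h0 : (0:ℝ) ∈ l) (hpos : 0 < l.getD 1 0) :
    (∀ x ∈ l, x ≠ 0 → l.getD 1 0 ≤ x) ∧ l.count 0 = 1 := by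
  match l, hsort, hnn, h0, hpos with
  | [], _, _, h0, _ => exact absurd h0 List.not_mem_nil
  | [a], _, hnn, h0, hpos => exact absurd hpos (lt_irrefl 0)
  | a :: b :: t, hsort, hnn, h0, hpos =>
    obtain ⟨_, hkey, hcnt, _⟩ := sorted_aux hsort h0 hnn
    exact ⟨hkey, hcnt hpos⟩

lemma sorted_list_facts2 {l : List ℝ} (hsort : l.Pairwise (· ≤ ·)) (hnn : ∀ z ∈ l, 0 ≤ z)
    (h0 : (0:ℝ) ∈ l) (hlen : 2 ≤ l.length) (hz : l.getD 1 0 = 0) : 2 ≤ l.count 0 := by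
  match l, hsort, hnn, h0, hlen, hz with
  | a :: b :: t, hsort, hnn, h0, _, hz =>
    obtain ⟨_, _, _, hcnt⟩ := sorted_aux hsort h0 hnn
    exact hcnt hz

end ListAux2

section Variational2

variable {W : Type*} [Fintype W] [DecidableEq W]

lemma dot_single (v : W → ℝ) (i : W) : v ⬝ᵥ (Pi.single i 1 : W → ℝ) = v i := by
  rw [dotProduct, Finset.sum_eq_single i]
  · simp
  · intro j _ hj
    rw [Pi.single_eq_of_ne hj, mul_zero]
  · intro h
    exact absurd (Finset.mem_univ i) h

/-- R1 : variational lower bound for vectors orthogonal to the all-ones vector. -/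
lemma sndEig_le_rayleigh [Nonempty W] {M : Matrix W W ℝ} (hM : M.PosSemidef)
    (hone : M *ᵥ (fun _ => 1) = 0) {y : W → ℝ} (hy : ∑ v, y v = 0) :
    sndEig M * (y ⬝ᵥ y) ≤ y ⬝ᵥ (M *ᵥ y) := by
  obtain ⟨μ, U, d, hμnn, hd0, hdex, hsum, hQ, hN, hPU, hroots, heig⟩ := spectral_package' hM hone
  have hMy : 0 ≤ y ⬝ᵥ (M *ᵥ y) := by have := hM.dotProduct_mulVec_nonneg y; rwa [star_trivial] at this
  rcases le_or_gt (sndEig M) 0 with hα | hα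
  · exact le_trans (mul_nonpos_of_nonpos_of_nonneg hα (dotProduct_self_nonneg' y)) hMy
  set l := (M.charpoly.roots).sort (· ≤ ·) with hldef
  have hα' : sndEig M = l.getD 1 0 := rfl
  have hsort : l.Pairwise (· ≤ ·) := Multiset.pairwise_sort _ _
  have hmem : ∀ x : ℝ, x ∈ l ↔ ∃ j, μ j = x := by
    intro x
    rw [hldef, Multiset.mem_sort, hroots, Multiset.mem_map]
    simp
  have hnn : ∀ z ∈ l, 0 ≤ z := by
    intro z hz; obtain ⟨j, hj⟩ := (hmem z).mp hz; exact hj ▸ hμnn j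
  have h0mem : (0:ℝ) ∈ l := by
    rw [hmem]
    obtain ⟨j, hj⟩ := hdex
    refine ⟨j, ?_⟩
    by_contra h
    exact hj (hd0 j h)
  obtain ⟨hkey, hcount⟩ := sorted_list_facts hsort hnn h0mem (hα' ▸ hα)
  have hcount' : (Finset.univ.filter (fun j => (0:ℝ) = μ j)).card = 1 := by
    have h1 : l.count 0 = Multiset.count 0 M.charpoly.roots := by
      rw [← Multiset.coe_count, hldef, Multiset.sort_eq]
    rw [h1, hroots, Multiset.count_map] at hcount
    rw [Finset.card_def, Finset.filter_val]
    exact hcount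
  obtain ⟨j₀, hj₀⟩ := Finset.card_eq_one.mp hcount'
  have huniq : ∀ j, μ j = 0 → j = j₀ := by
    intro j hj
    have hjmem : j ∈ Finset.univ.filter (fun j => (0:ℝ) = μ j) :=
      Finset.mem_filter.mpr ⟨Finset.mem_univ _, hj.symm⟩
    rw [hj₀] at hjmem
    exact Finset.mem_singleton.mp hjmem
  have hdz : ∀ j, j ≠ j₀ → d j = 0 := fun j hj => hd0 j (fun h => hj (huniq j h))
  have hdj₀ : d j₀ ≠ 0 := by
    obtain ⟨j, hj⟩ := hdex
    by_cases h : j = j₀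
    · exact h ▸ hj
    · exact absurd (hdz j h) hj
  have hc₀ : (star U *ᵥ y) j₀ = 0 := by
    have h1 : (0:ℝ) = d ⬝ᵥ (star U *ᵥ y) := hy ▸ hsum y
    have h2 : d ⬝ᵥ (star U *ᵥ y) = d j₀ * (star U *ᵥ y) j₀ :=
      Finset.sum_eq_single j₀ (fun j _ hj => by rw [hdz j hj, zero_mul])
        (fun h => absurd (Finset.mem_univ _) h)
    rcases mul_eq_zero.mp (h2 ▸ h1).symm with h | h
    · exact absurd h hdj₀
    · exact h
  rw [hQ y, hN y, Finset.mul_sum]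
  apply Finset.sum_le_sum
  intro j _
  by_cases h : μ j = 0
  · rw [huniq j h, hc₀]
    simp
  · exact mul_le_mul_of_nonneg_right (hkey (μ j) ((hmem _).mpr ⟨j, rfl⟩) h) (sq_nonneg _)

/-- E1 : an eigenvalue with eigenvector orthogonal to the all-ones vector dominates sndEig. -/
lemma sndEig_le_of_eigenvector [Nonempty W] {M : Matrix W W ℝ} (hM : M.PosSemidef)
    (hone : M *ᵥ (fun _ => 1) = 0) {y : W → ℝ} {t : ℝ} (hy0 : y ≠ 0)
    (hysum : ∑ v, y v = 0) (heig : M *ᵥ y = t • y) : sndEig M ≤ t := by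
  have h := sndEig_le_rayleigh hM hone hysum
  rw [heig, dotProduct_smul, smul_eq_mul] at h
  exact le_of_mul_le_mul_right h (dotProduct_self_pos' hy0)

/-- R2 : existence of an eigenvector for sndEig orthogonal to the all-ones vector. -/
lemma exists_sndEig_eigenvector {M : Matrix W W ℝ} (hcard : 2 ≤ Fintype.card W)
    (hM : M.PosSemidef) (hone : M *ᵥ (fun _ => 1) = 0) :
    ∃ y : W → ℝ, y ≠ 0 ∧ (∑ v, y v = 0) ∧ M *ᵥ y = sndEig M • y := by
  have hne : Nonempty W := Fintype.card_pos_iff.mp (by omega)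
  obtain ⟨μ, U, d, hμnn, hd0, hdex, hsum, hQ, hN, hPU, hroots, heig⟩ := spectral_package' hM hone
  set l := (M.charpoly.roots).sort (· ≤ ·) with hldef
  have hα' : sndEig M = l.getD 1 0 := rfl
  have hsort : l.Pairwise (· ≤ ·) := Multiset.pairwise_sort _ _
  have hmem : ∀ x : ℝ, x ∈ l ↔ ∃ j, μ j = x := by
    intro x
    rw [hldef, Multiset.mem_sort, hroots, Multiset.mem_map]
    simp
  have hnn : ∀ z ∈ l, 0 ≤ z := by
    intro z hz; obtain ⟨j, hj⟩ := (hmem z).mp hz; exact hj ▸ hμnn j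
  have h0mem : (0:ℝ) ∈ l := by
    rw [hmem]
    obtain ⟨j, hj⟩ := hdex
    exact ⟨j, by by_contra h; exact hj (hd0 j h)⟩
  have hlen : l.length = Fintype.card W := by
    rw [hldef, Multiset.length_sort, hroots, Multiset.card_map, ← Finset.card_def,
      Finset.card_univ]
  have hlen2 : 2 ≤ l.length := hlen ▸ hcard
  have hαmem : l.getD 1 0 ∈ l := getD1_mem hlen2
  have hUne : ∀ c : W → ℝ, c ≠ 0 → U *ᵥ c ≠ 0 := by
    intro c hc h
    apply hc
    rw [← hPU c, h, Matrix.mulVec_zero]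
  rcases (hnn _ hαmem).lt_or_eq with hpos | hzero
  · -- positive second eigenvalue
    obtain ⟨j₁, hj₁⟩ := (hmem _).mp hαmem
    refine ⟨U *ᵥ Pi.single j₁ 1, hUne _ ?_, ?_, ?_⟩
    · intro h
      have := congrFun h j₁
      simp at this
    · rw [hsum (U *ᵥ Pi.single j₁ 1), hPU, dot_single]
      exact hd0 j₁ (by rw [hj₁]; exact ne_of_gt hpos)
    · rw [hα']
      apply heig
      intro j
      by_cases h : j = j₁
      · subst h; rw [hj₁]
      · rw [Pi.single_eq_of_ne h, mul_zero, mul_zero]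
  · -- second eigenvalue is zero : two independent kernel vectors
    have hcnt : 2 ≤ l.count 0 := sorted_list_facts2 hsort hnn h0mem hlen2 hzero.symm
    have hcnt' : 1 < (Finset.univ.filter (fun j => (0:ℝ) = μ j)).card := by
      have h1 : l.count 0 = Multiset.count 0 M.charpoly.roots := by
        rw [← Multiset.coe_count, hldef, Multiset.sort_eq]
      rw [h1, hroots, Multiset.count_map] at hcnt
      rw [Finset.card_def, Finset.filter_val]
      omega
    obtain ⟨j₁, hj₁m, j₂, hj₂m, hj12⟩ := Finset.one_lt_card.mp hcnt'
    have hμ1 : μ j₁ = 0 := ((Finset.mem_filter.mp hj₁m).2).symm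
    have hμ2 : μ j₂ = 0 := ((Finset.mem_filter.mp hj₂m).2).symm
    rw [hα', ← hzero]
    by_cases hd1 : d j₁ = 0
    · refine ⟨U *ᵥ Pi.single j₁ 1, hUne _ ?_, ?_, ?_⟩
      · intro h
        have := congrFun h j₁
        simp at this
      · rw [hsum (U *ᵥ Pi.single j₁ 1), hPU, dot_single]
        exact hd1
      · apply heig
        intro j
        by_cases h : j = j₁
        · subst h; rw [hμ1]
        · rw [Pi.single_eq_of_ne h, mul_zero, mul_zero]
    · set c : W → ℝ := d j₂ • (Pi.single j₁ 1 : W → ℝ) - d j₁ • (Pi.single j₂ 1 : W → ℝ)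
        with hc
      have hcj₂ : c j₂ = -(d j₁) := by
        simp only [hc, Pi.sub_apply, Pi.smul_apply, smul_eq_mul]
        rw [Pi.single_eq_of_ne (Ne.symm hj12), Pi.single_eq_same]
        ring
      refine ⟨U *ᵥ c, hUne _ ?_, ?_, ?_⟩
      · intro h
        rw [h] at hcj₂
        exact hd1 (by simpa using hcj₂.symm)
      · rw [hsum (U *ᵥ c), hPU, hc]
        rw [dotProduct_sub, dotProduct_smul, dotProduct_smul,
          dot_single, dot_single]
        simp [mul_comm]
      · apply heig
        intro j
        rw [zero_mul]
        by_cases h1 : j = j₁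
        · subst h1
          rw [hμ1, zero_mul]
        · by_cases h2 : j = j₂
          · subst h2
            rw [hμ2, zero_mul]
          · have : c j = 0 := by
              simp only [hc, Pi.sub_apply, Pi.smul_apply, smul_eq_mul]
              rw [Pi.single_eq_of_ne h1, Pi.single_eq_of_ne h2]
              ring
            rw [this, mul_zero]

end Variational2
noncomputable abbrev decAdj {V : Type*} (G : SimpleGraph V) : DecidableRel G.Adj :=
  Classical.decRel _

attribute [local instance] decAdj

section GraphBasics

variable {V : Type*} [Fintype V] [DecidableEq V] (G : SimpleGraph V)

lemma lapMat_posSemidef : (lapMat G).PosSemidef := by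
  unfold lapMat
  exact SimpleGraph.posSemidef_lapMatrix (R := ℝ) (G := G)

lemma lapMat_mulVec_one : lapMat G *ᵥ (fun _ => 1) = 0 := by
  unfold lapMat
  exact SimpleGraph.lapMatrix_mulVec_const_eq_zero (R := ℝ) (G := G)

lemma lapMat_quadform (x : V → ℝ) :
    x ⬝ᵥ (lapMat G *ᵥ x) = (∑ u, ∑ v, if G.Adj u v then (x u - x v)^2 else 0) / 2 := by
  rw [show x ⬝ᵥ (lapMat G *ᵥ x) = Matrix.toLinearMap₂' ℝ (G.lapMatrix ℝ) x x from
    (Matrix.toLinearMap₂'_apply' _ _ _).symm]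
  rw [SimpleGraph.lapMatrix_toLinearMap₂']

lemma lapMat_mulVec_eq (x : V → ℝ) (u : V) :
    (lapMat G *ᵥ x) u = ∑ v, if G.Adj u v then x u - x v else 0 := by
  rw [show (lapMat G *ᵥ x) u = (G.lapMatrix ℝ *ᵥ x) u from rfl,
    SimpleGraph.lapMatrix_mulVec_apply]
  have hdeg : (G.degree u : ℝ) = ∑ v, if G.Adj u v then (1:ℝ) else 0 := by
    rw [← SimpleGraph.card_neighborFinset_eq_degree, SimpleGraph.neighborFinset_eq_filter,
      ← Finset.sum_filter]
    simp
  have hnb : ∑ v ∈ G.neighborFinset u, x v = ∑ v, if G.Adj u v then x v else 0 := by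
    rw [SimpleGraph.neighborFinset_eq_filter, Finset.sum_filter]
  rw [hdeg, hnb, Finset.sum_mul, ← Finset.sum_sub_distrib]
  apply Finset.sum_congr rfl
  intro v _
  by_cases h : G.Adj u v <;> simp [h]

end GraphBasics

section IsoInvariance

variable {V : Type*} [Fintype V] [DecidableEq V] {W : Type*} [Fintype W] [DecidableEq W]

lemma degree_iso {H : SimpleGraph V} {H' : SimpleGraph W} (e : H ≃g H') (u : W) :
    H'.degree u = H.degree (e.symm u) := by
  rw [← SimpleGraph.card_neighborFinset_eq_degree, ← SimpleGraph.card_neighborFinset_eq_degree]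
  apply Finset.card_bij (fun w _ => e.symm w)
  · intro w hw
    rw [SimpleGraph.mem_neighborFinset] at hw ⊢
    exact e.symm.map_adj_iff.mpr hw
  · intro a _ b _ hab
    exact e.symm.injective hab
  · intro b hb
    refine ⟨e b, ?_, by simp⟩
    rw [SimpleGraph.mem_neighborFinset] at hb ⊢
    have h2 : H.Adj (e.symm u) (e.symm (e b)) ↔ H'.Adj u (e b) := e.symm.map_adj_iff
    rw [← h2] at *
    simpa using hb

lemma sndEig_lapMat_iso {H : SimpleGraph V} {H' : SimpleGraph W} (e : H ≃g H') :
    sndEig (lapMat H) = sndEig (lapMat H') := by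
  have hmat : lapMat H' = Matrix.reindex e.toEquiv e.toEquiv (lapMat H) := by
    apply Matrix.ext
    intro u v
    show (H'.lapMatrix ℝ) u v = (H.lapMatrix ℝ) (e.symm u) (e.symm v)
    unfold SimpleGraph.lapMatrix SimpleGraph.degMatrix
    simp only [Matrix.sub_apply, SimpleGraph.adjMatrix_apply, Matrix.of_apply]
    congr 1
    · by_cases h : u = v
      · subst h
        rw [Matrix.diagonal_apply_eq, Matrix.diagonal_apply_eq, degree_iso e u]
      · rw [Matrix.diagonal_apply_ne _ h, Matrix.diagonal_apply_ne _ (fun hc => h (by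
          simpa using congrArg e.toEquiv hc))]
    · have h3 : H'.Adj u v ↔ H.Adj (e.symm u) (e.symm v) := e.symm.map_adj_iff.symm
      by_cases h : H'.Adj u v
      · rw [if_pos h, if_pos (h3.mp h)]
      · rw [if_neg h, if_neg (fun hc => h (h3.mpr hc))]
  unfold sndEig
  rw [hmat, Matrix.charpoly_reindex]

end IsoInvariance
section Token

set_option linter.unusedSectionVars false

variable {V : Type*} [Fintype V] [DecidableEq V]

/-- evaluation of a function on 2-subsets at an (ordered) pair of vertices -/
def pairF (g : {s : Finset V // s.card = 2} → ℝ) (v u : V) : ℝ :=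
  if h : ({v, u} : Finset V).card = 2 then g ⟨{v, u}, h⟩ else 0

lemma pairF_same (g : {s : Finset V // s.card = 2} → ℝ) (v : V) : pairF g v v = 0 := by
  rw [pairF, dif_neg]
  simp

lemma pairF_of_ne (g : {s : Finset V // s.card = 2} → ℝ) {v u : V} (h : u ≠ v) :
    pairF g v u = g ⟨{v, u}, Finset.card_pair (Ne.symm h)⟩ := dif_pos _

lemma pairF_symm (g : {s : Finset V // s.card = 2} → ℝ) (v u : V) :
    pairF g v u = pairF g u v := by
  unfold pairF
  rw [Finset.pair_comm v u]

lemma pairF_comp (Fn : ℝ → ℝ) (h0 : Fn 0 = 0) (g : {s : Finset V // s.card = 2} → ℝ)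
    (v u : V) : pairF (fun A => Fn (g A)) v u = Fn (pairF g v u) := by
  unfold pairF
  split
  · rfl
  · rw [h0]

lemma exists_pair_rep {A : {s : Finset V // s.card = 2}} {v : V} (hv : v ∈ A.1) :
    ∃ u, u ≠ v ∧ A.1 = {v, u} := by
  obtain ⟨a, b, hab, hA⟩ := Finset.card_eq_two.mp A.2
  rw [hA] at hv
  rcases Finset.mem_insert.mp hv with h | h
  · exact ⟨b, by rw [← h] at hab; exact hab.symm, by rw [hA, h]⟩
  · have h : v = b := Finset.mem_singleton.mp h
    exact ⟨a, by rw [← h] at hab; exact hab, by rw [hA, h, Finset.pair_comm]⟩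

/-- C1 : summing over pairs containing `v` -/
lemma sum_pairs_containing (v : V) (g : {s : Finset V // s.card = 2} → ℝ) :
    ∑ A : {s : Finset V // s.card = 2}, (if v ∈ A.1 then g A else 0) = ∑ u, pairF g v u := by
  rw [← Finset.sum_filter, ← Finset.sum_erase Finset.univ (pairF_same g v)]
  symm
  apply Finset.sum_bij (fun u hu => (⟨{v, u},
    Finset.card_pair (fun h => (Finset.mem_erase.mp hu).1 h.symm)⟩ :
      {s : Finset V // s.card = 2}))
  · intro u _
    exact Finset.mem_filter.mpr ⟨Finset.mem_univ _, Finset.mem_insert_self _ _⟩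
  · intro a ha b hb hab
    have h1 : ({v, a} : Finset V) = {v, b} := congrArg Subtype.val hab
    have hbmem : b ∈ ({v, a} : Finset V) := h1 ▸
      Finset.mem_insert.mpr (Or.inr (Finset.mem_singleton_self _))
    rcases Finset.mem_insert.mp hbmem with h | h
    · exact absurd h (Finset.mem_erase.mp hb).1
    · exact (Finset.mem_singleton.mp h).symm
  · intro A hA
    obtain ⟨u, huv, hrep⟩ := exists_pair_rep (Finset.mem_filter.mp hA).2
    exact ⟨u, Finset.mem_erase.mpr ⟨huv, Finset.mem_univ _⟩, Subtype.ext hrep.symm⟩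
  · intro u hu
    rw [pairF_of_ne g (Finset.mem_erase.mp hu).1]

/-- C2 : double sum over ordered pairs -/
lemma sum_pairs_double (g : {s : Finset V // s.card = 2} → ℝ) :
    ∑ v, ∑ u, pairF g v u = 2 * ∑ A : {s : Finset V // s.card = 2}, g A := by
  have h1 : ∀ v, ∑ u, pairF g v u
      = ∑ A : {s : Finset V // s.card = 2}, (if v ∈ A.1 then g A else 0) :=
    fun v => (sum_pairs_containing v g).symm
  simp_rw [h1]
  rw [Finset.sum_comm]
  have h2 : ∀ A : {s : Finset V // s.card = 2}, ∑ v, (if v ∈ A.1 then g A else 0) = 2 * g A := by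
    intro A
    rw [Finset.sum_ite_mem, Finset.univ_inter, Finset.sum_const, A.2]
    rw [nsmul_eq_mul]
    norm_num
  rw [Finset.sum_congr rfl (fun A _ => h2 A), ← Finset.mul_sum]

lemma symmDiff_pair {m s t : V} (hs : s ≠ m) (ht : t ≠ m) (hst : s ≠ t) :
    symmDiff ({m, s} : Finset V) {m, t} = {s, t} := by
  ext x
  rw [Finset.mem_symmDiff]
  simp only [Finset.mem_insert, Finset.mem_singleton]
  constructor
  · rintro (⟨h1 | h1, h2⟩ | ⟨h1 | h1, h2⟩)
    · exact absurd (Or.inl h1) h2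
    · exact Or.inl h1
    · exact absurd (Or.inl h1) h2
    · exact Or.inr h1
  · rintro (rfl | rfl)
    · exact Or.inl ⟨Or.inr rfl, by rintro (h | h); exact hs h; exact hst h⟩
    · exact Or.inr ⟨Or.inr rfl, by rintro (h | h); exact ht h; exact hst h.symm⟩

/-- ADJ2 : adjacency in the token graph between pairs sharing the vertex `m` -/
lemma tokenAdj_pair {G : SimpleGraph V} {m s t : V} (hs : s ≠ m) (ht : t ≠ m)
    {A B : {s : Finset V // s.card = 2}} (hA : A.1 = {m, s}) (hB : B.1 = {m, t}) :
    (tokenGraph G 2).Adj A B ↔ G.Adj s t := by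
  constructor
  · rintro hadj
    by_cases hst : s = t
    · have hAB : A = B := Subtype.ext (by rw [hA, hB, hst])
      rw [hAB] at hadj
      exact absurd hadj ((tokenGraph G 2).loopless.irrefl B)
    · obtain ⟨a, b, hab, ha, hb, hd⟩ := hadj
      rw [hA, hB, symmDiff_pair hs ht hst] at hd
      rw [hA] at ha
      rw [hB] at hb
      have ha' : a ∈ ({s, t} : Finset V) := hd ▸ Finset.mem_insert_self a {b}
      have hb' : b ∈ ({s, t} : Finset V) := hd ▸
        Finset.mem_insert.mpr (Or.inr (Finset.mem_singleton_self _))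
      have has : a = s := by
        rcases Finset.mem_insert.mp ha' with h | h
        · exact h
        · rw [Finset.mem_singleton] at h
          subst h
          rcases Finset.mem_insert.mp ha with h | h
          · exact absurd h ht
          · exact absurd (Finset.mem_singleton.mp h).symm hst
      have hbt : b = t := by
        rcases Finset.mem_insert.mp hb' with h | h
        · subst h
          rcases Finset.mem_insert.mp hb with h | h
          · exact absurd h hs
          · exact absurd (Finset.mem_singleton.mp h) hst
        · exact Finset.mem_singleton.mp h
      rw [has, hbt] at hab
      exact hab
  · intro h
    refine ⟨s, t, h, ?_, ?_, ?_⟩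
    · rw [hA]; exact Finset.mem_insert.mpr (Or.inr (Finset.mem_singleton_self _))
    · rw [hB]; exact Finset.mem_insert.mpr (Or.inr (Finset.mem_singleton_self _))
    · rw [hA, hB, symmDiff_pair hs ht (G.ne_of_adj h)]

/-- a token-graph neighbour of `{v,u}` avoiding `v` must contain `u` -/
lemma tokenAdj_mem {G : SimpleGraph V} {v u : V}
    {A C : {s : Finset V // s.card = 2}} (hA : A.1 = {v, u})
    (hadj : (tokenGraph G 2).Adj A C) (hvC : v ∉ C.1) : u ∈ C.1 := by
  obtain ⟨a, b, hab, ha, hb, hd⟩ := hadj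
  have hvA : v ∈ A.1 := hA ▸ Finset.mem_insert_self _ _
  have hvd : v ∈ symmDiff A.1 C.1 := Finset.mem_symmDiff.mpr (Or.inl ⟨hvA, hvC⟩)
  rw [hd] at hvd
  have hva : v = a := by
    rcases Finset.mem_insert.mp hvd with h | h
    · exact h
    · rw [Finset.mem_singleton] at h
      exact absurd (h ▸ hb) hvC
  by_contra huC
  have huv : u ≠ v := by
    intro h
    have hcard := A.2
    rw [hA, h] at hcard
    simp at hcard
  have huA : u ∈ A.1 := by
    rw [hA]; exact Finset.mem_insert.mpr (Or.inr (Finset.mem_singleton_self u))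
  have hud : u ∈ symmDiff A.1 C.1 := Finset.mem_symmDiff.mpr (Or.inl ⟨huA, huC⟩)
  rw [hd] at hud
  rcases Finset.mem_insert.mp hud with h | h
  · exact huv (h.trans hva.symm)
  · rw [Finset.mem_singleton] at h
    exact huC (h ▸ hb)

end Token
section Token2

set_option linter.unusedSectionVars false

variable {V : Type*} [Fintype V] [DecidableEq V]

lemma sum_erase_eq_ite (v : V) (g : V → ℝ) :
    ∑ u ∈ Finset.univ.erase v, g u = ∑ u, if u ≠ v then g u else 0 := by
  rw [← Finset.filter_ne', Finset.sum_filter]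

/-- NBR : neighbour sum decomposition in the token graph -/
lemma token_nbr (G : SimpleGraph V) {v u : V} (huv : u ≠ v)
    (A : {s : Finset V // s.card = 2}) (hA : A.1 = {v, u})
    (w : {s : Finset V // s.card = 2} → ℝ) :
    ∑ C : {s : Finset V // s.card = 2}, (if (tokenGraph G 2).Adj A C then w C else 0)
      = (∑ t, if G.Adj u t ∧ t ≠ v then pairF w v t else 0)
      + (∑ c, if G.Adj v c ∧ c ≠ u then pairF w u c else 0) := by
  have split : ∀ C : {s : Finset V // s.card = 2},
      (if (tokenGraph G 2).Adj A C then w C else 0) =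
      (if v ∈ C.1 then (if (tokenGraph G 2).Adj A C then w C else 0) else 0)
      + (if u ∈ C.1 then (if v ∈ C.1 then 0
          else (if (tokenGraph G 2).Adj A C then w C else 0)) else 0) := by
    intro C
    by_cases hv : v ∈ C.1
    · simp [hv]
    · rw [if_neg hv]
      by_cases hu : u ∈ C.1
      · rw [if_pos hu, if_neg hv, zero_add]
      · rw [if_neg hu, add_zero, if_neg (fun hadj => hu (tokenAdj_mem hA hadj hv))]
  rw [Finset.sum_congr rfl (fun C _ => split C), Finset.sum_add_distrib]
  congr 1
  · rw [sum_pairs_containing v (fun C => if (tokenGraph G 2).Adj A C then w C else 0)]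
    apply Finset.sum_congr rfl
    intro t _
    by_cases htv : t ≠ v
    · rw [pairF_of_ne _ htv,
        if_congr (tokenAdj_pair huv htv hA rfl) rfl rfl,
        pairF_of_ne w htv]
      exact if_congr (and_iff_left htv).symm rfl rfl
    · push_neg at htv
      subst htv
      rw [pairF_same, if_neg (fun h => h.2 rfl)]
  · rw [sum_pairs_containing u _]
    apply Finset.sum_congr rfl
    intro c _
    by_cases hcu : c ≠ u
    · rw [pairF_of_ne _ hcu]
      by_cases hcv : c = v
      · subst hcv
        rw [if_pos (Finset.mem_insert.mpr (Or.inr (Finset.mem_singleton_self c))),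
          if_neg (fun h => G.loopless.irrefl c h.1)]
      · have hvm : v ∉ ({u, c} : Finset V) := by
          intro hmem
          rcases Finset.mem_insert.mp hmem with h | h
          · exact huv h.symm
          · exact hcv (Finset.mem_singleton.mp h).symm
        rw [if_neg hvm,
          if_congr (tokenAdj_pair (Ne.symm huv) hcu (by rw [hA, Finset.pair_comm]) rfl) rfl rfl,
          pairF_of_ne w hcu]
        exact if_congr (and_iff_left hcu).symm rfl rfl
    · push_neg at hcu
      subst hcu
      rw [pairF_same, if_neg (fun h => h.2 rfl)]

/-- antisymmetric double sums vanish -/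
lemma sum_antisym (G : SimpleGraph V) (v : V) (f : V → ℝ) :
    ∑ u, ∑ t, (if u ≠ v ∧ t ≠ v ∧ G.Adj u t then f u - f t else 0) = 0 := by
  set S := ∑ u, ∑ t, (if u ≠ v ∧ t ≠ v ∧ G.Adj u t then f u - f t else 0) with hS
  have key : ∀ u t : V, (if u ≠ v ∧ t ≠ v ∧ G.Adj u t then f u - f t else 0)
      = -(if t ≠ v ∧ u ≠ v ∧ G.Adj t u then f t - f u else 0) := by
    intro u t
    by_cases h : u ≠ v ∧ t ≠ v ∧ G.Adj u t
    · rw [if_pos h, if_pos ⟨h.2.1, h.1, h.2.2.symm⟩]; ring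
    · rw [if_neg h, if_neg (fun hc => h ⟨hc.2.1, hc.1, hc.2.2.symm⟩), neg_zero]
  have h2 : S = -S := by
    nth_rewrite 1 [hS]
    calc ∑ u, ∑ t, (if u ≠ v ∧ t ≠ v ∧ G.Adj u t then f u - f t else 0)
        = ∑ u, ∑ t, -(if t ≠ v ∧ u ≠ v ∧ G.Adj t u then f t - f u else 0) := by
          exact Finset.sum_congr rfl fun u _ => Finset.sum_congr rfl fun t _ => key u t
      _ = -∑ u, ∑ t, (if t ≠ v ∧ u ≠ v ∧ G.Adj t u then f t - f u else 0) := by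
          simp [Finset.sum_neg_distrib]
      _ = -∑ t, ∑ u, (if t ≠ v ∧ u ≠ v ∧ G.Adj t u then f t - f u else 0) := by
          rw [Finset.sum_comm]
      _ = -S := rfl
  linarith

end Token2
section Token3

set_option linter.unusedSectionVars false

variable {V : Type*} [Fintype V] [DecidableEq V]

/-- the vertex marginal of a function on 2-subsets -/
def yF (x : {s : Finset V // s.card = 2} → ℝ) : V → ℝ := fun v => ∑ u, pairF x v u

/-- I1 : intertwining identity -/
lemma intertwine (G : SimpleGraph V) (x : {s : Finset V // s.card = 2} → ℝ) (v : V) :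
    ∑ A : {s : Finset V // s.card = 2},
        (if v ∈ A.1 then (lapMat (tokenGraph G 2) *ᵥ x) A else 0)
      = (lapMat G *ᵥ yF x) v := by
  rw [sum_pairs_containing v _, ← Finset.sum_erase Finset.univ (pairF_same _ v)]
  have step : ∀ u ∈ Finset.univ.erase v, pairF (lapMat (tokenGraph G 2) *ᵥ x) v u
      = (∑ t, if G.Adj u t ∧ t ≠ v then pairF x v u - pairF x v t else 0)
        + (∑ c, if G.Adj v c ∧ c ≠ u then pairF x v u - pairF x u c else 0) := by
    intro u hu
    have huv : u ≠ v := (Finset.mem_erase.mp hu).1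
    rw [pairF_of_ne _ huv, lapMat_mulVec_eq, token_nbr G huv _ rfl]
    congr 1
    · apply Finset.sum_congr rfl
      intro t _
      by_cases h : G.Adj u t ∧ t ≠ v
      · rw [if_pos h, if_pos h, pairF_of_ne _ h.2, pairF_of_ne x h.2, pairF_of_ne x huv]
      · rw [if_neg h, if_neg h]
    · apply Finset.sum_congr rfl
      intro c _
      by_cases h : G.Adj v c ∧ c ≠ u
      · rw [if_pos h, if_pos h, pairF_of_ne _ h.2, pairF_of_ne x h.2, pairF_of_ne x huv]
      · rw [if_neg h, if_neg h]
  rw [Finset.sum_congr rfl step, Finset.sum_add_distrib]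
  have hS1 : ∑ u ∈ Finset.univ.erase v,
      (∑ t, if G.Adj u t ∧ t ≠ v then pairF x v u - pairF x v t else 0) = 0 := by
    rw [sum_erase_eq_ite]
    have hmerge : ∀ u, (if u ≠ v
        then (∑ t, if G.Adj u t ∧ t ≠ v then pairF x v u - pairF x v t else 0) else 0)
        = ∑ t, (if u ≠ v ∧ t ≠ v ∧ G.Adj u t then pairF x v u - pairF x v t else 0) := by
      intro u
      by_cases h : u ≠ v
      · rw [if_pos h]
        apply Finset.sum_congr rfl
        intro t _
        exact if_congr ⟨fun hc => ⟨h, hc.2, hc.1⟩, fun hc => ⟨hc.2.2, hc.2.1⟩⟩ rfl rfl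
      · rw [if_neg h]
        symm
        apply Finset.sum_eq_zero
        intro t _
        rw [if_neg (fun hc => h hc.1)]
    rw [Finset.sum_congr rfl (fun u _ => hmerge u)]
    exact sum_antisym G v (pairF x v)
  rw [hS1, zero_add, lapMat_mulVec_eq, sum_erase_eq_ite]
  have merge2 : ∀ u, (if u ≠ v
      then (∑ c, if G.Adj v c ∧ c ≠ u then pairF x v u - pairF x u c else 0) else 0)
      = ∑ c, (if G.Adj v c
          then (if u ≠ c ∧ u ≠ v then pairF x v u - pairF x u c else 0) else 0) := by
    intro u
    by_cases h : u ≠ v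
    · rw [if_pos h]
      apply Finset.sum_congr rfl
      intro c _
      by_cases hadj : G.Adj v c
      · rw [if_pos hadj]
        exact if_congr ⟨fun hc => ⟨Ne.symm hc.2, h⟩, fun hc => ⟨hadj, Ne.symm hc.1⟩⟩ rfl rfl
      · rw [if_neg hadj, if_neg (fun hc => hadj hc.1)]
    · rw [if_neg h]
      symm
      apply Finset.sum_eq_zero
      intro c _
      by_cases hadj : G.Adj v c
      · rw [if_pos hadj, if_neg (fun hc => h hc.2)]
      · rw [if_neg hadj]
  rw [Finset.sum_congr rfl (fun u _ => merge2 u), Finset.sum_comm]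
  apply Finset.sum_congr rfl
  intro c _
  by_cases hadj : G.Adj v c
  · simp only [if_pos hadj]
    have hcv : c ≠ v := fun h => G.loopless.irrefl v (h ▸ hadj)
    set g : V → ℝ := fun u => pairF x v u - pairF x u c with hg
    have hfil : ∑ u, (if u ≠ c ∧ u ≠ v then g u else 0)
        = ∑ u ∈ (Finset.univ.erase v).erase c, g u := by
      rw [← Finset.sum_filter]
      congr 1
      ext u
      simp only [Finset.mem_filter, Finset.mem_erase, Finset.mem_univ, and_true]
      tauto
    rw [hfil]
    have h1 : g v + ∑ u ∈ Finset.univ.erase v, g u = ∑ u, g u :=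
      Finset.add_sum_erase _ g (Finset.mem_univ v)
    have h2 : g c + ∑ u ∈ (Finset.univ.erase v).erase c, g u
        = ∑ u ∈ Finset.univ.erase v, g u :=
      Finset.add_sum_erase _ g (Finset.mem_erase.mpr ⟨hcv, Finset.mem_univ c⟩)
    have h3 : g v + g c = 0 := by
      simp only [hg]
      rw [pairF_same, pairF_same]
      ring
    have h4 : ∑ u, g u = yF x v - yF x c := by
      simp only [hg]
      rw [Finset.sum_sub_distrib]
      congr 1
      exact Finset.sum_congr rfl (fun u _ => pairF_symm x u c)
    linarith
  · simp only [if_neg hadj]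
    exact Finset.sum_const_zero

/-- I2 : quadratic form of the token graph decomposes over links -/
lemma quadform_token (G : SimpleGraph V) (x : {s : Finset V // s.card = 2} → ℝ) :
    x ⬝ᵥ (lapMat (tokenGraph G 2) *ᵥ x)
      = (∑ m, ∑ s, ∑ t, if G.Adj s t ∧ s ≠ m ∧ t ≠ m
          then (pairF x m s - pairF x m t)^2 else 0) / 2 := by
  rw [lapMat_quadform]
  congr 1
  have hdouble := sum_pairs_double
    (fun A => ∑ C, if (tokenGraph G 2).Adj A C then (x A - x C)^2 else 0)
  have hv : ∀ v, ∑ u, pairF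
      (fun A => ∑ C, if (tokenGraph G 2).Adj A C then (x A - x C)^2 else 0) v u
      = (∑ u, ∑ t, if G.Adj u t ∧ u ≠ v ∧ t ≠ v
            then (pairF x v u - pairF x v t)^2 else 0)
        + (∑ u, ∑ c, if G.Adj v c ∧ c ≠ u ∧ u ≠ v
            then (pairF x u v - pairF x u c)^2 else 0) := by
    intro v
    rw [← Finset.sum_erase Finset.univ (pairF_same _ v), sum_erase_eq_ite,
      ← Finset.sum_add_distrib]
    apply Finset.sum_congr rfl
    intro u _
    by_cases h : u ≠ v
    · rw [if_pos h, pairF_of_ne _ h, token_nbr G h _ rfl]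
      congr 1
      · apply Finset.sum_congr rfl
        intro t _
        by_cases ht : G.Adj u t ∧ t ≠ v
        · rw [if_pos ht, if_pos ⟨ht.1, h, ht.2⟩, pairF_of_ne _ ht.2, pairF_of_ne x ht.2,
            pairF_of_ne x h]
        · rw [if_neg ht, if_neg (fun hc => ht ⟨hc.1, hc.2.2⟩)]
      · apply Finset.sum_congr rfl
        intro c _
        by_cases hc : G.Adj v c ∧ c ≠ u
        · rw [if_pos hc, if_pos ⟨hc.1, hc.2, h⟩, pairF_of_ne _ hc.2, pairF_of_ne x hc.2,
            pairF_symm x u v, pairF_of_ne x h]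
        · rw [if_neg hc, if_neg (fun hcc => hc ⟨hcc.1, hcc.2.1⟩)]
    · rw [if_neg h]
      have z1 : ∑ t, (if G.Adj u t ∧ u ≠ v ∧ t ≠ v
          then (pairF x v u - pairF x v t)^2 else 0) = 0 :=
        Finset.sum_eq_zero (fun t _ => if_neg (fun hc => h hc.2.1))
      have z2 : ∑ c, (if G.Adj v c ∧ c ≠ u ∧ u ≠ v
          then (pairF x u v - pairF x u c)^2 else 0) = 0 :=
        Finset.sum_eq_zero (fun c _ => if_neg (fun hc => h hc.2.2))
      rw [z1, z2, add_zero]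
  rw [Finset.sum_congr rfl (fun v _ => hv v), Finset.sum_add_distrib] at hdouble
  have hQ2 : ∑ v, ∑ u, ∑ c, (if G.Adj v c ∧ c ≠ u ∧ u ≠ v
        then (pairF x u v - pairF x u c)^2 else 0)
      = ∑ m, ∑ s, ∑ t, (if G.Adj s t ∧ s ≠ m ∧ t ≠ m
        then (pairF x m s - pairF x m t)^2 else 0) := by
    rw [Finset.sum_comm]
    apply Finset.sum_congr rfl
    intro u _
    apply Finset.sum_congr rfl
    intro v _
    apply Finset.sum_congr rfl
    intro c _
    exact if_congr ⟨fun hc => ⟨hc.1, Ne.symm hc.2.2, hc.2.1⟩,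
      fun hc => ⟨hc.1, hc.2.2, Ne.symm hc.2.1⟩⟩ rfl rfl
  rw [hQ2] at hdouble
  linarith

/-- I3 : the per-vertex term is the quadratic form of the vertex-deleted subgraph -/
lemma quadform_link (G : SimpleGraph V) (x : {s : Finset V // s.card = 2} → ℝ) (m : V) :
    ∑ s, ∑ t, (if G.Adj s t ∧ s ≠ m ∧ t ≠ m then (pairF x m s - pairF x m t)^2 else 0)
      = 2 * ((fun s : {v : V // v ≠ m} => pairF x m s.1) ⬝ᵥ
          (lapMat (deleteVert G m) *ᵥ (fun s : {v : V // v ≠ m} => pairF x m s.1))) := by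
  rw [lapMat_quadform, mul_comm, div_mul_cancel₀ _ (two_ne_zero)]
  have hstep : ∀ s, (∑ t, if G.Adj s t ∧ s ≠ m ∧ t ≠ m
        then (pairF x m s - pairF x m t)^2 else 0)
      = (if s ≠ m then (∑ t ∈ Finset.univ.erase m,
          if G.Adj s t then (pairF x m s - pairF x m t)^2 else 0) else 0) := by
    intro s
    by_cases hs : s ≠ m
    · rw [if_pos hs, sum_erase_eq_ite]
      apply Finset.sum_congr rfl
      intro t _
      by_cases ht : t ≠ m
      · rw [if_pos ht]
        exact if_congr ⟨fun hc => hc.1, fun hc => ⟨hc, hs, ht⟩⟩ rfl rfl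
      · rw [if_neg ht, if_neg (fun hc => ht hc.2.2)]
    · rw [if_neg hs]
      apply Finset.sum_eq_zero
      intro t _
      rw [if_neg (fun hc => hs hc.2.1)]
  rw [Finset.sum_congr rfl (fun s _ => hstep s), ← sum_erase_eq_ite,
    Finset.sum_subtype (p := fun v => v ≠ m) (Finset.univ.erase m) (fun u => by simp)]
  apply Finset.sum_congr rfl
  intro s' _
  rw [Finset.sum_subtype (p := fun v => v ≠ m) (Finset.univ.erase m) (fun u => by simp)]
  apply Finset.sum_congr rfl
  intro t' _
  exact if_congr Iff.rfl rfl rfl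

lemma norm_link (x : {s : Finset V // s.card = 2} → ℝ) (m : V) :
    (fun s : {v : V // v ≠ m} => pairF x m s.1) ⬝ᵥ
        (fun s : {v : V // v ≠ m} => pairF x m s.1)
      = ∑ u, (pairF x m u)^2 := by
  rw [dotProduct,
    ← Finset.sum_subtype (p := fun v => v ≠ m) (Finset.univ.erase m) (fun u => by simp)
      (fun u => pairF x m u * pairF x m u),
    Finset.sum_erase _ (by rw [pairF_same]; ring)]
  exact Finset.sum_congr rfl fun u _ => (pow_two (pairF x m u)).symm

lemma sum_link (x : {s : Finset V // s.card = 2} → ℝ) (m : V) :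
    ∑ s' : {v : V // v ≠ m}, pairF x m s'.1 = yF x m := by
  rw [← Finset.sum_subtype (p := fun v => v ≠ m) (Finset.univ.erase m) (fun u => by simp) (fun u => pairF x m u),
    Finset.sum_erase _ (pairF_same x m)]
  rfl

lemma sum_sq_links (x : {s : Finset V // s.card = 2} → ℝ) :
    ∑ m, ∑ u, (pairF x m u)^2 = 2 * (x ⬝ᵥ x) := by
  have h1 : ∀ m u : V, (pairF x m u)^2 = pairF (fun A => (x A)^2) m u :=
    fun m u => (pairF_comp (fun r => r^2) (by norm_num) x m u).symm
  simp_rw [h1]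
  rw [sum_pairs_double]
  congr 1
  rw [dotProduct]
  exact Finset.sum_congr rfl fun A _ => (pow_two (x A))

lemma yF_sum (x : {s : Finset V // s.card = 2} → ℝ) :
    ∑ v, yF x v = 2 * ∑ A : {s : Finset V // s.card = 2}, x A :=
  sum_pairs_double x

end Token3
section Token4

set_option linter.unusedSectionVars false

variable {V : Type*} [Fintype V] [DecidableEq V]

lemma count_mem_compl {s t : V} (hst : s ≠ t) (c : ℝ) :
    ∑ m, (if s ≠ m ∧ t ≠ m then c else 0) = ((Fintype.card V : ℝ) - 2) * c := by
  rw [← Finset.sum_filter, Finset.sum_const]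
  have hfil : Finset.univ.filter (fun m => s ≠ m ∧ t ≠ m)
      = Finset.univ \ ({s, t} : Finset V) := by
    ext m
    simp only [Finset.mem_filter, Finset.mem_univ, true_and, Finset.mem_sdiff,
      Finset.mem_insert, Finset.mem_singleton, not_or]
    constructor
    · rintro ⟨h1, h2⟩
      exact ⟨fun hc => h1 hc.symm, fun hc => h2 hc.symm⟩
    · rintro ⟨h1, h2⟩
      exact ⟨fun hc => h1 hc.symm, fun hc => h2 hc.symm⟩
  have h2 : 2 ≤ Fintype.card V := by
    have := Finset.card_le_univ ({s, t} : Finset V)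
    rwa [Finset.card_pair hst] at this
  rw [hfil, Finset.card_sdiff_of_subset (Finset.subset_univ _), Finset.card_pair hst,
    Finset.card_univ, nsmul_eq_mul]
  push_cast [h2]
  ring

/-- the function `A ↦ ∑_{j ∈ A} y j` (the binomial matrix applied to `y`) -/
def bF (y : V → ℝ) : {s : Finset V // s.card = 2} → ℝ := fun A => ∑ j ∈ A.1, y j

lemma pairF_bF {v u : V} (h : u ≠ v) (y : V → ℝ) : pairF (bF y) v u = y v + y u := by
  rw [pairF_of_ne _ h]
  exact Finset.sum_pair (Ne.symm h)

lemma bF_sum (y : V → ℝ) (hy : ∑ v, y v = 0) :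
    ∑ A : {s : Finset V // s.card = 2}, bF y A = 0 := by
  have h := sum_pairs_double (bF y)
  have hcalc : ∑ v, ∑ u, pairF (bF y) v u = 0 := by
    have hv : ∀ v, ∑ u, pairF (bF y) v u = ((Fintype.card V : ℝ) - 2) * y v := by
      intro v
      rw [← Finset.sum_erase Finset.univ (pairF_same _ v)]
      have hc1 : 1 ≤ Fintype.card V := Fintype.card_pos_iff.mpr ⟨v⟩
      calc ∑ u ∈ Finset.univ.erase v, pairF (bF y) v u
          = ∑ u ∈ Finset.univ.erase v, (y v + y u) :=
            Finset.sum_congr rfl (fun u hu => pairF_bF (Finset.mem_erase.mp hu).1 y)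
        _ = (Finset.univ.erase v).card • y v + ∑ u ∈ Finset.univ.erase v, y u := by
            rw [Finset.sum_add_distrib, Finset.sum_const]
        _ = ((Fintype.card V : ℝ) - 1) * y v + (0 - y v) := by
            rw [Finset.sum_erase_eq_sub (Finset.mem_univ v), hy,
              Finset.card_erase_of_mem (Finset.mem_univ v), Finset.card_univ, nsmul_eq_mul]
            push_cast [hc1]
            ring
        _ = ((Fintype.card V : ℝ) - 2) * y v := by ring
    rw [Finset.sum_congr rfl (fun v _ => hv v), ← Finset.mul_sum, hy, mul_zero]
  rw [hcalc] at h
  linarith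

lemma bF_norm (y : V → ℝ) (hy : ∑ v, y v = 0) :
    bF y ⬝ᵥ bF y = ((Fintype.card V : ℝ) - 2) * (y ⬝ᵥ y) := by
  have h := sum_pairs_double (fun A => (bF y A)^2)
  have hN : y ⬝ᵥ y = ∑ v, (y v)^2 := Finset.sum_congr rfl fun v _ => (pow_two (y v)).symm
  have hv : ∀ v, ∑ u, pairF (fun A => (bF y A)^2) v u
      = (Fintype.card V : ℝ) * (y v)^2 + (∑ u, (y u)^2) - 4 * (y v)^2 := by
    intro v
    have hdiag : pairF (fun A => (bF y A)^2) v v = 0 := pairF_same _ v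
    rw [← Finset.sum_erase Finset.univ hdiag]
    have hpt : ∀ u ∈ Finset.univ.erase v, pairF (fun A => (bF y A)^2) v u = (y v + y u)^2 := by
      intro u hu
      rw [pairF_comp (fun r => r^2) (by norm_num), pairF_bF (Finset.mem_erase.mp hu).1]
    rw [Finset.sum_congr rfl hpt, Finset.sum_erase_eq_sub (Finset.mem_univ v)]
    have hexp : ∀ u : V, (y v + y u)^2 = (y v)^2 + 2*(y v)*(y u) + (y u)^2 := fun u => by ring
    rw [Finset.sum_congr rfl (fun u _ => hexp u), Finset.sum_add_distrib,
      Finset.sum_add_distrib, Finset.sum_const, Finset.card_univ, ← Finset.mul_sum,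
      hy, nsmul_eq_mul]
    ring
  rw [Finset.sum_congr rfl (fun v _ => hv v)] at h
  have htot : ∑ v, ((Fintype.card V : ℝ) * (y v)^2 + (∑ u, (y u)^2) - 4 * (y v)^2)
      = (2 * (Fintype.card V : ℝ) - 4) * (∑ v, (y v)^2) := by
    rw [Finset.sum_sub_distrib, Finset.sum_add_distrib, ← Finset.mul_sum,
      Finset.sum_const, Finset.card_univ, ← Finset.mul_sum, nsmul_eq_mul]
    ring
  rw [htot] at h
  have hbb : bF y ⬝ᵥ bF y = ∑ A : {s : Finset V // s.card = 2}, (bF y A)^2 :=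
    Finset.sum_congr rfl fun A _ => (pow_two (bF y A)).symm
  rw [hbb, hN]
  linarith

lemma token_quad_B (G : SimpleGraph V) (y : V → ℝ) :
    bF y ⬝ᵥ (lapMat (tokenGraph G 2) *ᵥ bF y)
      = ((Fintype.card V : ℝ) - 2) * (y ⬝ᵥ (lapMat G *ᵥ y)) := by
  rw [quadform_token, lapMat_quadform]
  have hT : ∀ m s t : V, (if G.Adj s t ∧ s ≠ m ∧ t ≠ m
        then (pairF (bF y) m s - pairF (bF y) m t)^2 else 0)
      = (if G.Adj s t ∧ s ≠ m ∧ t ≠ m then (y s - y t)^2 else 0) := by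
    intro m s t
    by_cases h : G.Adj s t ∧ s ≠ m ∧ t ≠ m
    · rw [if_pos h, if_pos h, pairF_bF h.2.1 y, pairF_bF h.2.2 y]
      have : (y m + y s) - (y m + y t) = y s - y t := by ring
      rw [this]
    · rw [if_neg h, if_neg h]
  have hmain : ∑ m, ∑ s, ∑ t, (if G.Adj s t ∧ s ≠ m ∧ t ≠ m
        then (pairF (bF y) m s - pairF (bF y) m t)^2 else 0)
      = ((Fintype.card V : ℝ) - 2)
          * ∑ s, ∑ t, (if G.Adj s t then (y s - y t)^2 else 0) := by
    rw [Finset.sum_congr rfl (fun m _ => Finset.sum_congr rfl (fun s _ =>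
      Finset.sum_congr rfl (fun t _ => hT m s t)))]
    rw [Finset.sum_comm]
    rw [Finset.mul_sum]
    apply Finset.sum_congr rfl
    intro s _
    rw [Finset.sum_comm, Finset.mul_sum]
    apply Finset.sum_congr rfl
    intro t _
    by_cases hadj : G.Adj s t
    · have hcongr : ∀ m : V, (if G.Adj s t ∧ s ≠ m ∧ t ≠ m then (y s - y t)^2 else 0)
          = (if s ≠ m ∧ t ≠ m then (y s - y t)^2 else 0) := by
        intro m
        exact if_congr (and_iff_right hadj) rfl rfl
      rw [Finset.sum_congr rfl (fun m _ => hcongr m),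
        count_mem_compl (G.ne_of_adj hadj), if_pos hadj]
    · rw [if_neg hadj, mul_zero]
      apply Finset.sum_eq_zero
      intro m _
      rw [if_neg (fun hc => hadj hc.1)]
  rw [hmain]
  ring

lemma deleteVert_sndEig_eq {G : SimpleGraph V} (φ : G ≃g G) (m : V) :
    sndEig (lapMat (deleteVert G m)) = sndEig (lapMat (deleteVert G (φ m))) := by
  apply sndEig_lapMat_iso
  refine ⟨Equiv.subtypeEquiv φ.toEquiv (fun a => not_congr ?_), ?_⟩
  · exact (Equiv.apply_eq_iff_eq φ.toEquiv).symm.trans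
      (Iff.rfl.trans ⟨fun h => h ▸ rfl, fun h => φ.toEquiv.injective (by simpa using h)⟩)
  · intro a b
    exact φ.map_adj_iff

end Token4
noncomputable section

theorem stmt_9 {n : ℕ} (hn : 3 < n) (G : SimpleGraph (Fin n))
    (hvt : ∀ u v : Fin n, ∃ φ : G ≃g G, φ u = v)
    (i : Fin n) (hi : algConn G ≤ 2 * algConn (deleteVert G i)) :
    algConn (tokenGraph G 2) = algConn G := by
  classical
  have hc : Fintype.card (Fin n) = n := Fintype.card_fin n
  have hcR : (Fintype.card (Fin n) : ℝ) = (n : ℝ) := by rw [hc]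
  haveI hNV : Nonempty (Fin n) := ⟨⟨0, by omega⟩⟩
  have hcardP : 2 ≤ Fintype.card {s : Finset (Fin n) // s.card = 2} := by
    rw [Fintype.card_finset_len, hc]
    have h1 : Nat.choose 4 2 ≤ Nat.choose n 2 := Nat.choose_le_choose 2 (by omega)
    have h6 : Nat.choose 4 2 = 6 := rfl
    omega
  haveI hNP : Nonempty {s : Finset (Fin n) // s.card = 2} :=
    Fintype.card_pos_iff.mp (by omega)
  have hn4R : (4:ℝ) ≤ (n:ℝ) := by exact_mod_cast (by omega : 4 ≤ n)
  have hn2 : (0:ℝ) < (n:ℝ) - 2 := by linarith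
  have hi' : sndEig (lapMat G) ≤ 2 * sndEig (lapMat (deleteVert G i)) := hi
  show sndEig (lapMat (tokenGraph G 2)) = sndEig (lapMat G)
  apply le_antisymm
  · -- α(F₂) ≤ α(G)
    obtain ⟨y, hy0, hysum, heig⟩ := exists_sndEig_eigenvector (M := lapMat G)
      (by rw [hc]; omega) (lapMat_posSemidef G) (lapMat_mulVec_one G)
    have hyy : 0 < y ⬝ᵥ y := dotProduct_self_pos' hy0
    have hxsum : ∑ A : {s : Finset (Fin n) // s.card = 2}, bF y A = 0 := bF_sum y hysum
    have hxnorm : bF y ⬝ᵥ bF y = ((n:ℝ) - 2) * (y ⬝ᵥ y) := by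
      rw [bF_norm y hysum, hcR]
    have hray := sndEig_le_rayleigh (lapMat_posSemidef (tokenGraph G 2))
      (lapMat_mulVec_one (tokenGraph G 2)) hxsum
    have hquad : bF y ⬝ᵥ (lapMat (tokenGraph G 2) *ᵥ bF y)
        = ((n:ℝ) - 2) * (y ⬝ᵥ (lapMat G *ᵥ y)) := by
      rw [token_quad_B G y, hcR]
    have heigq : y ⬝ᵥ (lapMat G *ᵥ y) = sndEig (lapMat G) * (y ⬝ᵥ y) := by
      rw [heig, dotProduct_smul, smul_eq_mul]
    rw [hxnorm, hquad, heigq] at hray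
    have hrw : ((n:ℝ) - 2) * (sndEig (lapMat G) * (y ⬝ᵥ y))
        = sndEig (lapMat G) * (((n:ℝ) - 2) * (y ⬝ᵥ y)) := by ring
    rw [hrw] at hray
    exact le_of_mul_le_mul_right hray (mul_pos hn2 hyy)
  · -- α(G) ≤ α(F₂)
    obtain ⟨x, hx0, hxsum, heig⟩ := exists_sndEig_eigenvector hcardP
      (lapMat_posSemidef (tokenGraph G 2)) (lapMat_mulVec_one (tokenGraph G 2))
    have hxx : 0 < x ⬝ᵥ x := dotProduct_self_pos' hx0
    by_cases hy : yF x = 0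
    · -- Fiedler vector is "local"
      haveI hNsub : ∀ m : Fin n, Nonempty {v : Fin n // v ≠ m} := by
        intro m
        obtain ⟨b, hb⟩ := Fintype.exists_ne_of_one_lt_card (by omega) m
        exact ⟨⟨b, hb⟩⟩
      have heigq : x ⬝ᵥ (lapMat (tokenGraph G 2) *ᵥ x)
          = sndEig (lapMat (tokenGraph G 2)) * (x ⬝ᵥ x) := by
        rw [heig, dotProduct_smul, smul_eq_mul]
      have hiso : ∀ m : Fin n,
          sndEig (lapMat (deleteVert G m)) = sndEig (lapMat (deleteVert G i)) := by
        intro m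
        obtain ⟨φ, hφ⟩ := hvt m i
        have := deleteVert_sndEig_eq φ m
        rwa [hφ] at this
      have hper : ∀ m : Fin n,
          sndEig (lapMat (deleteVert G i)) * (∑ u, (pairF x m u)^2)
            ≤ (fun s : {v : Fin n // v ≠ m} => pairF x m s.1) ⬝ᵥ
                (lapMat (deleteVert G m) *ᵥ (fun s : {v : Fin n // v ≠ m} => pairF x m s.1)) := by
        intro m
        have hsub : ∑ s' : {v : Fin n // v ≠ m}, pairF x m s'.1 = 0 := by
          rw [sum_link x m, hy]
          rfl
        have h := sndEig_le_rayleigh (lapMat_posSemidef (deleteVert G m))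
          (lapMat_mulVec_one (deleteVert G m)) hsub
        rw [norm_link x m, hiso m] at h
        exact h
      have hdecomp : ∑ m, ((fun s : {v : Fin n // v ≠ m} => pairF x m s.1) ⬝ᵥ
            (lapMat (deleteVert G m) *ᵥ (fun s : {v : Fin n // v ≠ m} => pairF x m s.1)))
          = x ⬝ᵥ (lapMat (tokenGraph G 2) *ᵥ x) := by
        rw [quadform_token G x,
          Finset.sum_congr rfl (fun m (_ : m ∈ Finset.univ) => (quadform_link G x m)),
          ← Finset.mul_sum, mul_div_cancel_left₀ _ (two_ne_zero)]
      have hsum2 : ∑ m, (sndEig (lapMat (deleteVert G i)) * (∑ u, (pairF x m u)^2))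
          = sndEig (lapMat (deleteVert G i)) * (2 * (x ⬝ᵥ x)) := by
        rw [← Finset.mul_sum, sum_sq_links x]
      have hle := Finset.sum_le_sum (fun m (_ : m ∈ Finset.univ) => hper m)
      rw [hsum2, hdecomp, heigq] at hle
      have hfin : sndEig (lapMat G) * (x ⬝ᵥ x)
          ≤ sndEig (lapMat (tokenGraph G 2)) * (x ⬝ᵥ x) := by
        calc sndEig (lapMat G) * (x ⬝ᵥ x)
            ≤ (2 * sndEig (lapMat (deleteVert G i))) * (x ⬝ᵥ x) :=
              mul_le_mul_of_nonneg_right hi' (le_of_lt hxx)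
          _ = sndEig (lapMat (deleteVert G i)) * (2 * (x ⬝ᵥ x)) := by ring
          _ ≤ sndEig (lapMat (tokenGraph G 2)) * (x ⬝ᵥ x) := hle
      exact le_of_mul_le_mul_right hfin hxx
    · -- Fiedler vector has nonzero marginal
      have hysum : ∑ v, yF x v = 0 := by
        rw [yF_sum, hxsum, mul_zero]
      have heigy : lapMat G *ᵥ yF x = sndEig (lapMat (tokenGraph G 2)) • yF x := by
        funext v
        rw [← intertwine G x v, heig]
        have hpt : ∀ A : {s : Finset (Fin n) // s.card = 2},
            (if v ∈ A.1 then (sndEig (lapMat (tokenGraph G 2)) • x) A else 0)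
              = sndEig (lapMat (tokenGraph G 2)) * (if v ∈ A.1 then x A else 0) := by
          intro A
          by_cases h : v ∈ A.1
          · rw [if_pos h, if_pos h, Pi.smul_apply, smul_eq_mul]
          · rw [if_neg h, if_neg h, mul_zero]
        rw [Finset.sum_congr rfl (fun A _ => hpt A), ← Finset.mul_sum,
          sum_pairs_containing v x]
        rfl
      exact sndEig_le_of_eigenvector (lapMat_posSemidef G) (lapMat_mulVec_one G)
        hy hysum heigy

end
end

section
/- Let n = 2ν be even with ν ≥ 2. Then for every r ∈ {0, 1, …, ν−1}, the number λ_r = 8 sin²(rπ/(n−1)) is an eigenvalue of the Laplacian matrix L(F_2(C_n)); moreover λ_0 = 0, and λ_{ν−1} = 8 sin²(((n−2)/(n−1))·(π/2)) equals the largest Laplacian eigenvalue (spectral radius) of F_2(C_n). -/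
open Finset Polynomial Real Matrix

namespace Stmt14

lemma fpair_eq {α : Type*} [DecidableEq α] {a b c d : α} :
    ({a,b} : Finset α) = {c,d} ↔ (a = c ∧ b = d) ∨ (a = d ∧ b = c) := by
  rw [← Finset.coe_inj]
  simp only [Finset.coe_insert, Finset.coe_singleton]
  exact Set.pair_eq_pair_iff

variable {n : ℕ}

abbrev Vt (n : ℕ) := {s : Finset (ZMod n) // s.card = 2}

def vmk (a b : ZMod n) (h : a ≠ b) : Vt n := ⟨{a,b}, Finset.card_pair h⟩

/-- cycle distance of a 2-subset -/
def dst (A : Finset (ZMod n)) : ℕ :=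
  A.sup fun i => A.sup fun j => min (i - j).val (j - i).val

lemma dst_pair [NeZero n] {a b : ZMod n} (h : a ≠ b) :
    dst ({a, b} : Finset (ZMod n)) = min (a - b).val (b - a).val := by
  have h1 : min (b - a).val (a - b).val = min (a - b).val (b - a).val := min_comm _ _
  simp [dst, Finset.sup_insert, Finset.sup_singleton, sub_self, ZMod.val_zero, h1]

lemma cast_inj' [NeZero n] {a b : ℕ} (ha : a < n) (hb : b < n) :
    ((a : ZMod n) = (b : ZMod n)) ↔ a = b := by
  constructor
  · intro h
    have := congrArg ZMod.val h
    rwa [ZMod.val_cast_of_lt ha, ZMod.val_cast_of_lt hb] at this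
  · rintro rfl; rfl

lemma addc_inj [NeZero n] (u : ZMod n) {a b : ℕ} (ha : a < n) (hb : b < n) :
    (u + (a : ZMod n) = u + (b : ZMod n)) ↔ a = b := by
  rw [add_right_inj]; exact cast_inj' ha hb

lemma cast_ne_zero' [NeZero n] {a : ℕ} (h0 : 0 < a) (ha : a < n) : (a : ZMod n) ≠ 0 := by
  intro h
  have := (cast_inj' ha (Nat.pos_of_ne_zero (NeZero.ne n))).mp (by simpa using h)
  omega

lemma self_ne_add [NeZero n] (u : ZMod n) {c : ℕ} (h0 : 0 < c) (hc : c < n) :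
    u ≠ u + (c : ZMod n) := by
  intro h
  exact cast_ne_zero' h0 hc (left_eq_add.mp h)

lemma dst_add [NeZero n] (u : ZMod n) {c : ℕ} (h0 : 0 < c) (hc : c < n) :
    dst ({u, u + (c : ZMod n)} : Finset (ZMod n)) = min (n - c) c := by
  have hne := self_ne_add u h0 hc
  rw [dst_pair hne]
  have h1 : u + (c : ZMod n) - u = (c : ZMod n) := by ring
  have h2 : u - (u + (c : ZMod n)) = -(c : ZMod n) := by ring
  rw [h1, h2, ZMod.neg_val, if_neg (cast_ne_zero' h0 hc), ZMod.val_cast_of_lt hc]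

lemma dst_add' [NeZero n] {ν : ℕ} (hn : n = 2*ν) (u : ZMod n) {c : ℕ} (h0 : 0 < c)
    (hc : c ≤ ν) : dst ({u, u + (c : ZMod n)} : Finset (ZMod n)) = c := by
  have hν : 1 ≤ ν := le_trans h0 hc
  rw [dst_add u h0 (by omega), min_eq_right (by omega)]


lemma exists_rep [NeZero n] {ν : ℕ} (hn : n = 2*ν) (hν : 2 ≤ ν) (A : Vt n) :
    ∃ (u : ZMod n) (d : ℕ), 1 ≤ d ∧ d ≤ ν ∧ A.1 = {u, u + (d : ZMod n)} ∧ dst A.1 = d := by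
  obtain ⟨a, b, hab, hA⟩ := Finset.card_eq_two.mp A.2
  have hsub : b - a ≠ 0 := sub_ne_zero.mpr hab.symm
  set k := (b - a).val with hk
  have hk0 : k ≠ 0 := fun h => hsub ((ZMod.val_eq_zero _).mp h)
  have hkn : k < n := ZMod.val_lt _
  have hba : b = a + (k : ZMod n) := by
    rw [hk, ZMod.natCast_val, ZMod.cast_id]; ring
  by_cases hkν : k ≤ ν
  · exact ⟨a, k, by omega, hkν, by rw [hA, hba], by rw [hA, hba, dst_add' hn a (by omega) hkν]⟩
  · refine ⟨b, n - k, by omega, by omega, ?_, ?_⟩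
    · have hab' : a = b + ((n - k : ℕ) : ZMod n) := by
        have : ((n - k : ℕ) : ZMod n) = -(k : ZMod n) := by
          have : ((n - k : ℕ) : ZMod n) + (k : ZMod n) = 0 := by
            rw [← Nat.cast_add]
            rw [Nat.sub_add_cancel (le_of_lt hkn)]
            exact ZMod.natCast_self n
          linear_combination this
        rw [this, hba]; ring
      rw [hA, hab', Finset.pair_comm]
    · rw [hA, Finset.pair_comm]
      have hab' : a = b + ((n - k : ℕ) : ZMod n) := by
        have : ((n - k : ℕ) : ZMod n) = -(k : ZMod n) := by
          have : ((n - k : ℕ) : ZMod n) + (k : ZMod n) = 0 := by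
            rw [← Nat.cast_add, Nat.sub_add_cancel (le_of_lt hkn)]
            exact ZMod.natCast_self n
          linear_combination this
        rw [this, hba]; ring
      rw [hab', dst_add' hn b (by omega) (by omega)]

lemma adj_iff (A B : Vt n) :
    (tokenGraph (cycleG n) 2).Adj A B ↔
      ∃ x y : ZMod n, (cycleG n).Adj x y ∧ x ∈ A.1 ∧ y ∉ A.1 ∧
        B.1 = insert y (A.1.erase x) := by
  constructor
  · rintro ⟨x, y, hxy, hxA, hyB, hd⟩
    have hne : x ≠ y := hxy.1
    have hyA : y ∉ A.1 := by
      intro hyA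
      have : y ∉ symmDiff A.1 B.1 := by
        rw [Finset.mem_symmDiff]; push_neg; exact ⟨fun _ => hyB, fun _ => hyA⟩
      rw [hd] at this; simp at this
    have hxB : x ∉ B.1 := by
      intro hxB
      have : x ∉ symmDiff A.1 B.1 := by
        rw [Finset.mem_symmDiff]; push_neg; exact ⟨fun _ => hxB, fun _ => hxA⟩
      rw [hd] at this; simp at this
    refine ⟨x, y, hxy, hxA, hyA, ?_⟩
    ext z
    simp only [Finset.mem_insert, Finset.mem_erase]
    have hz := Finset.ext_iff.mp hd z
    rw [Finset.mem_symmDiff] at hz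
    simp only [Finset.mem_insert, Finset.mem_singleton] at hz
    by_cases hzy : z = y
    · subst hzy; tauto
    · by_cases hzx : z = x
      · subst hzx; tauto
      · tauto
  · rintro ⟨x, y, hxy, hxA, hyA, hB⟩
    have hne : x ≠ y := hxy.1
    refine ⟨x, y, hxy, hxA, by rw [hB]; exact Finset.mem_insert_self _ _, ?_⟩
    ext z
    rw [Finset.mem_symmDiff]
    simp only [hB, Finset.mem_insert, Finset.mem_erase, Finset.mem_singleton]
    by_cases hzy : z = y
    · subst hzy; tauto
    · by_cases hzx : z = x
      · subst hzx; tauto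
      · tauto


lemma natCast_nsub_one [NeZero n] : ((n - 1 : ℕ) : ZMod n) = -1 := by
  have h1 : 1 ≤ n := Nat.one_le_iff_ne_zero.mpr (NeZero.ne n)
  rw [Nat.cast_sub h1, Nat.cast_one, ZMod.natCast_self]; ring

lemma sub_one_nf [NeZero n] (w : ZMod n) : w - 1 = w + ((n - 1 : ℕ) : ZMod n) := by
  rw [natCast_nsub_one]; ring

lemma cyc_adj [NeZero n] (hn4 : 4 ≤ n) (x y : ZMod n) :
    (cycleG n).Adj x y ↔ (y = x + 1 ∨ y = x - 1) := by
  have h10 : (1 : ZMod n) ≠ 0 := by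
    rw [← Nat.cast_one]
    exact cast_ne_zero' (by omega) (by omega)
  constructor
  · rintro ⟨hne, h | h⟩
    · right; linear_combination -h
    · left; linear_combination h
  · rintro (rfl | rfl)
    · refine ⟨?_, Or.inr (by ring)⟩
      intro h
      exact h10 (left_eq_add.mp h)
    · refine ⟨?_, Or.inl (by ring)⟩
      intro h
      have h' : x = x + (-1) := by linear_combination h
      have := left_eq_add.mp h'
      exact h10 (by linear_combination -this)

lemma vmk_eq_vmk {a b c d : ZMod n} {h h'} :
    vmk a b h = vmk c d h' ↔ ((a = c ∧ b = d) ∨ (a = d ∧ b = c)) := by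
  rw [vmk, vmk, Subtype.mk.injEq, fpair_eq]

open scoped Classical in
lemma mid_case [NeZero n] {ν : ℕ} (hn : n = 2*ν) (hν : 2 ≤ ν) (u : ZMod n) {d : ℕ}
    (h1 : 2 ≤ d) (h2 : d < ν) (A : Vt n) (hA : A.1 = {u, u + (d : ZMod n)}) (f : ℕ → ℝ) :
    (tokenGraph (cycleG n) 2).degree A = 4 ∧
      ∑ B ∈ (tokenGraph (cycleG n) 2).neighborFinset A, f (dst B.1)
        = 2 * f (d-1) + 2 * f (d+1) := by
  have hn4 : 4 ≤ n := by omega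
  -- basic disequalities
  have bne1 : u + ((1:ℕ) : ZMod n) ≠ u + ((d:ℕ) : ZMod n) := by
    rw [Ne, addc_inj u (by omega) (by omega)]; omega
  have bne2 : u + ((n-1:ℕ) : ZMod n) ≠ u + ((d:ℕ) : ZMod n) := by
    rw [Ne, addc_inj u (by omega) (by omega)]; omega
  have bne3 : u ≠ u + ((d+1:ℕ) : ZMod n) := self_ne_add u (by omega) (by omega)
  have bne4 : u ≠ u + ((d-1:ℕ) : ZMod n) := self_ne_add u (by omega) (by omega)
  set B₁ : Vt n := vmk _ _ bne1 with hB₁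
  set B₂ : Vt n := vmk _ _ bne2 with hB₂
  set B₃ : Vt n := vmk _ _ bne3 with hB₃
  set B₄ : Vt n := vmk _ _ bne4 with hB₄
  -- cast normalizations
  have c1 : ((1:ℕ) : ZMod n) = 1 := Nat.cast_one
  have cd1 : ((d+1:ℕ) : ZMod n) = (d : ZMod n) + 1 := by push_cast; ring
  have cdm1 : ((d-1:ℕ) : ZMod n) = (d : ZMod n) - 1 := by
    push_cast [Nat.cast_sub (by omega : 1 ≤ d)]; ring
  have cnm1 : ((n-1:ℕ) : ZMod n) = -1 := natCast_nsub_one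
  have hudne : u ≠ u + (d : ZMod n) := self_ne_add u (by omega) (by omega)
  have herase1 : ({u, u + (d : ZMod n)} : Finset (ZMod n)).erase u = {u + (d : ZMod n)} := by
    apply Finset.erase_insert; simp [hudne]
  have herase2 : ({u, u + (d : ZMod n)} : Finset (ZMod n)).erase (u + (d : ZMod n)) = {u} := by
    rw [Finset.pair_comm]; apply Finset.erase_insert; simp [Ne.symm hudne]
  have hN : (tokenGraph (cycleG n) 2).neighborFinset A = {B₁, B₂, B₃, B₄} := by
    ext B
    rw [SimpleGraph.mem_neighborFinset, adj_iff]
    constructor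
    · rintro ⟨x, y, hxy, hxA, hyA, hB⟩
      rw [hA] at hxA hB
      simp only [Finset.mem_insert, Finset.mem_singleton] at hxA
      rcases (cyc_adj hn4 x y).mp hxy with rfl | rfl
      · rcases hxA with hx | hx <;> rw [hx] at hB
        · -- B = B₁
          have : B = B₁ := by
            apply Subtype.ext
            rw [hB, herase1]
            show insert (u + 1) {u + (d : ZMod n)}
              = ({u + ((1:ℕ) : ZMod n), u + ((d:ℕ) : ZMod n)} : Finset (ZMod n))
            rw [c1]
          simp [this]
        · -- B = B₃
          have : B = B₃ := by
            apply Subtype.ext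
            rw [hB, herase2]
            show insert (u + (d : ZMod n) + 1) {u}
              = ({u, u + ((d+1:ℕ) : ZMod n)} : Finset (ZMod n))
            rw [cd1, ← add_assoc]
            exact Finset.pair_comm _ _
          simp [this]
      · rcases hxA with hx | hx <;> rw [hx] at hB
        · -- B = B₂
          have : B = B₂ := by
            apply Subtype.ext
            rw [hB, herase1]
            show insert (u - 1) {u + (d : ZMod n)}
              = ({u + ((n-1:ℕ) : ZMod n), u + ((d:ℕ) : ZMod n)} : Finset (ZMod n))
            rw [sub_one_nf]
          simp [this]
        · -- B = B₄
          have : B = B₄ := by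
            apply Subtype.ext
            rw [hB, herase2]
            show insert (u + (d : ZMod n) - 1) {u}
              = ({u, u + ((d-1:ℕ) : ZMod n)} : Finset (ZMod n))
            rw [cdm1, ← add_sub_assoc]
            exact Finset.pair_comm _ _
          simp [this]
    · intro hB
      simp only [Finset.mem_insert, Finset.mem_singleton] at hB
      rcases hB with rfl | rfl | rfl | rfl
      · refine ⟨u, u + ((1:ℕ) : ZMod n), ?_, by rw [hA]; simp, ?_, ?_⟩
        · rw [cyc_adj hn4, c1]; left; rfl
        · rw [hA]
          simp only [Finset.mem_insert, Finset.mem_singleton]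
          push_neg
          exact ⟨Ne.symm (self_ne_add u (by omega) (by omega)), bne1⟩
        · rw [hA, herase1]; rfl
      · refine ⟨u, u + ((n-1:ℕ) : ZMod n), ?_, by rw [hA]; simp, ?_, ?_⟩
        · rw [cyc_adj hn4]; right; rw [sub_one_nf]
        · rw [hA]
          simp only [Finset.mem_insert, Finset.mem_singleton]
          push_neg
          exact ⟨Ne.symm (self_ne_add u (by omega) (by omega)), bne2⟩
        · rw [hA, herase1]; rfl
      · refine ⟨u + ((d:ℕ) : ZMod n), u + ((d+1:ℕ) : ZMod n), ?_, by rw [hA]; simp, ?_, ?_⟩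
        · rw [cyc_adj hn4, cd1, ← add_assoc]; left; rfl
        · rw [hA]
          simp only [Finset.mem_insert, Finset.mem_singleton]
          push_neg
          refine ⟨Ne.symm bne3, ?_⟩
          rw [Ne, addc_inj u (by omega) (by omega)]; omega
        · rw [hA, herase2]
          exact Finset.pair_comm _ _
      · refine ⟨u + ((d:ℕ) : ZMod n), u + ((d-1:ℕ) : ZMod n), ?_, by rw [hA]; simp, ?_, ?_⟩
        · rw [cyc_adj hn4, cdm1, ← add_sub_assoc]; right; rfl
        · rw [hA]
          simp only [Finset.mem_insert, Finset.mem_singleton]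
          push_neg
          refine ⟨Ne.symm bne4, ?_⟩
          rw [Ne, addc_inj u (by omega) (by omega)]; omega
        · rw [hA, herase2]
          exact Finset.pair_comm _ _
  -- distinctness
  have d12 : B₁ ≠ B₂ := by
    rw [hB₁, hB₂, Ne, vmk_eq_vmk]
    rintro (⟨h, -⟩ | ⟨h, -⟩)
    · exact absurd ((addc_inj u (by omega) (by omega)).mp h) (by omega)
    · exact absurd ((addc_inj u (by omega) (by omega)).mp h) (by omega)
  have d13 : B₁ ≠ B₃ := by
    rw [hB₁, hB₃, Ne, vmk_eq_vmk]
    rintro (⟨h, -⟩ | ⟨h, -⟩)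
    · exact self_ne_add u (by omega) (by omega) h.symm
    · exact absurd ((addc_inj u (by omega) (by omega)).mp h) (by omega)
  have d14 : B₁ ≠ B₄ := by
    rw [hB₁, hB₄, Ne, vmk_eq_vmk]
    rintro (⟨h, -⟩ | ⟨-, h⟩)
    · exact self_ne_add u (by omega) (by omega) h.symm
    · exact self_ne_add u (by omega) (by omega) h.symm
  have d23 : B₂ ≠ B₃ := by
    rw [hB₂, hB₃, Ne, vmk_eq_vmk]
    rintro (⟨h, -⟩ | ⟨-, h⟩)
    · exact self_ne_add u (by omega) (by omega) h.symm
    · exact self_ne_add u (by omega) (by omega) h.symm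
  have d24 : B₂ ≠ B₄ := by
    rw [hB₂, hB₄, Ne, vmk_eq_vmk]
    rintro (⟨h, -⟩ | ⟨-, h⟩)
    · exact self_ne_add u (by omega) (by omega) h.symm
    · exact self_ne_add u (by omega) (by omega) h.symm
  have d34 : B₃ ≠ B₄ := by
    rw [hB₃, hB₄, Ne, vmk_eq_vmk]
    rintro (⟨-, h⟩ | ⟨h, -⟩)
    · exact absurd ((addc_inj u (by omega) (by omega)).mp h) (by omega)
    · exact self_ne_add u (by omega) (by omega) h
  -- dst values
  have dst1 : dst B₁.1 = d - 1 := by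
    show dst ({u + ((1:ℕ) : ZMod n), u + ((d:ℕ) : ZMod n)} : Finset (ZMod n)) = d - 1
    have h : u + ((d:ℕ) : ZMod n) = (u + ((1:ℕ) : ZMod n)) + ((d-1 : ℕ) : ZMod n) := by
      rw [c1, cdm1]; ring
    rw [h, dst_add' hn _ (by omega) (by omega)]
  have dst2 : dst B₂.1 = d + 1 := by
    show dst ({u + ((n-1:ℕ) : ZMod n), u + ((d:ℕ) : ZMod n)} : Finset (ZMod n)) = d + 1
    have h : u + ((d:ℕ) : ZMod n) = (u + ((n-1:ℕ) : ZMod n)) + ((d+1 : ℕ) : ZMod n) := by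
      rw [cnm1, cd1]; ring
    rw [h, dst_add' hn _ (by omega) (by omega)]
  have dst3 : dst B₃.1 = d + 1 := dst_add' hn _ (by omega) (by omega)
  have dst4 : dst B₄.1 = d - 1 := dst_add' hn _ (by omega) (by omega)
  constructor
  · rw [← SimpleGraph.card_neighborFinset_eq_degree, hN]
    rw [Finset.card_insert_of_notMem (by simp [d12, d13, d14]),
      Finset.card_insert_of_notMem (by simp [d23, d24]),
      Finset.card_insert_of_notMem (by simp [d34]), Finset.card_singleton]
  · rw [hN]
    rw [Finset.sum_insert (by simp [d12, d13, d14]),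
      Finset.sum_insert (by simp [d23, d24]),
      Finset.sum_insert (by simp [d34]), Finset.sum_singleton]
    rw [dst1, dst2, dst3, dst4]; ring


open scoped Classical in
lemma one_case [NeZero n] {ν : ℕ} (hn : n = 2*ν) (hν : 2 ≤ ν) (u : ZMod n)
    (A : Vt n) (hA : A.1 = {u, u + ((1:ℕ) : ZMod n)}) (f : ℕ → ℝ) :
    (tokenGraph (cycleG n) 2).degree A = 2 ∧
      ∑ B ∈ (tokenGraph (cycleG n) 2).neighborFinset A, f (dst B.1) = 2 * f 2 := by
  have hn4 : 4 ≤ n := by omega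
  have bne2 : u + ((n-1:ℕ) : ZMod n) ≠ u + ((1:ℕ) : ZMod n) := by
    rw [Ne, addc_inj u (by omega) (by omega)]; omega
  have bne3 : u ≠ u + ((2:ℕ) : ZMod n) := self_ne_add u (by omega) (by omega)
  set B₂ : Vt n := vmk _ _ bne2 with hB₂
  set B₃ : Vt n := vmk _ _ bne3 with hB₃
  have c1 : ((1:ℕ) : ZMod n) = 1 := Nat.cast_one
  have c2 : ((2:ℕ) : ZMod n) = 1 + 1 := by push_cast; ring
  have cnm1 : ((n-1:ℕ) : ZMod n) = -1 := natCast_nsub_one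
  have hudne : u ≠ u + ((1:ℕ) : ZMod n) := self_ne_add u (by omega) (by omega)
  have herase1 : ({u, u + ((1:ℕ) : ZMod n)} : Finset (ZMod n)).erase u
      = {u + ((1:ℕ) : ZMod n)} := by
    apply Finset.erase_insert; rw [Finset.mem_singleton]; exact hudne
  have herase2 : ({u, u + ((1:ℕ) : ZMod n)} : Finset (ZMod n)).erase (u + ((1:ℕ) : ZMod n))
      = {u} := by
    rw [Finset.pair_comm]; apply Finset.erase_insert
    rw [Finset.mem_singleton]; exact Ne.symm hudne
  have hN : (tokenGraph (cycleG n) 2).neighborFinset A = {B₂, B₃} := by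
    ext B
    rw [SimpleGraph.mem_neighborFinset, adj_iff]
    constructor
    · rintro ⟨x, y, hxy, hxA, hyA, hB⟩
      rw [hA] at hxA hB hyA
      simp only [Finset.mem_insert, Finset.mem_singleton] at hxA
      rcases (cyc_adj hn4 x y).mp hxy with rfl | rfl
      · rcases hxA with hx | hx <;> rw [hx] at hB hyA
        · -- y = u + 1 ∈ A : contradiction
          exact absurd (by rw [c1]; simp) hyA
        · -- B = B₃
          have : B = B₃ := by
            apply Subtype.ext
            rw [hB, herase2]
            show insert (u + ((1:ℕ) : ZMod n) + 1) {u}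
              = ({u, u + ((2:ℕ) : ZMod n)} : Finset (ZMod n))
            rw [c2, c1, ← add_assoc]
            exact Finset.pair_comm _ _
          simp [this]
      · rcases hxA with hx | hx <;> rw [hx] at hB hyA
        · -- B = B₂
          have : B = B₂ := by
            apply Subtype.ext
            rw [hB, herase1]
            show insert (u - 1) {u + ((1:ℕ) : ZMod n)}
              = ({u + ((n-1:ℕ) : ZMod n), u + ((1:ℕ) : ZMod n)} : Finset (ZMod n))
            rw [sub_one_nf]
          simp [this]
        · -- y = u + 1 - 1 = u ∈ A : contradiction
          exact absurd (by rw [c1]; simp) hyA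
    · intro hB
      simp only [Finset.mem_insert, Finset.mem_singleton] at hB
      rcases hB with rfl | rfl
      · refine ⟨u, u + ((n-1:ℕ) : ZMod n), ?_, by rw [hA]; simp, ?_, ?_⟩
        · rw [cyc_adj hn4]; right; rw [sub_one_nf]
        · rw [hA]
          simp only [Finset.mem_insert, Finset.mem_singleton]
          push_neg
          exact ⟨Ne.symm (self_ne_add u (by omega) (by omega)), bne2⟩
        · rw [hA, herase1]; rfl
      · refine ⟨u + ((1:ℕ) : ZMod n), u + ((2:ℕ) : ZMod n), ?_, by rw [hA]; simp, ?_, ?_⟩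
        · rw [cyc_adj hn4, c2, c1, ← add_assoc]; left; rfl
        · rw [hA]
          simp only [Finset.mem_insert, Finset.mem_singleton]
          push_neg
          refine ⟨Ne.symm bne3, ?_⟩
          rw [Ne, addc_inj u (by omega) (by omega)]; omega
        · rw [hA, herase2]
          exact Finset.pair_comm _ _
  have d23 : B₂ ≠ B₃ := by
    rw [hB₂, hB₃, Ne, vmk_eq_vmk]
    rintro (⟨h, -⟩ | ⟨-, h⟩)
    · exact self_ne_add u (by omega) (by omega) h.symm
    · exact self_ne_add u (by omega) (by omega) h.symm
  have dst2 : dst B₂.1 = 2 := by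
    show dst ({u + ((n-1:ℕ) : ZMod n), u + ((1:ℕ) : ZMod n)} : Finset (ZMod n)) = 2
    have h : u + ((1:ℕ) : ZMod n) = (u + ((n-1:ℕ) : ZMod n)) + ((2 : ℕ) : ZMod n) := by
      rw [cnm1, c1, c2]; ring
    rw [h, dst_add' hn _ (by omega) (by omega)]
  have dst3 : dst B₃.1 = 2 := dst_add' hn _ (by omega) (by omega)
  constructor
  · rw [← SimpleGraph.card_neighborFinset_eq_degree, hN]
    rw [Finset.card_insert_of_notMem (by simp [d23]), Finset.card_singleton]
  · rw [hN, Finset.sum_insert (by simp [d23]), Finset.sum_singleton, dst2, dst3]; ring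

open scoped Classical in
lemma top_case [NeZero n] {ν : ℕ} (hn : n = 2*ν) (hν : 2 ≤ ν) (u : ZMod n)
    (A : Vt n) (hA : A.1 = {u, u + ((ν:ℕ) : ZMod n)}) (f : ℕ → ℝ) :
    (tokenGraph (cycleG n) 2).degree A = 4 ∧
      ∑ B ∈ (tokenGraph (cycleG n) 2).neighborFinset A, f (dst B.1) = 4 * f (ν-1) := by
  have hn4 : 4 ≤ n := by omega
  have bne1 : u + ((1:ℕ) : ZMod n) ≠ u + ((ν:ℕ) : ZMod n) := by
    rw [Ne, addc_inj u (by omega) (by omega)]; omega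
  have bne2 : u + ((n-1:ℕ) : ZMod n) ≠ u + ((ν:ℕ) : ZMod n) := by
    rw [Ne, addc_inj u (by omega) (by omega)]; omega
  have bne3 : u ≠ u + ((ν+1:ℕ) : ZMod n) := self_ne_add u (by omega) (by omega)
  have bne4 : u ≠ u + ((ν-1:ℕ) : ZMod n) := self_ne_add u (by omega) (by omega)
  set B₁ : Vt n := vmk _ _ bne1 with hB₁
  set B₂ : Vt n := vmk _ _ bne2 with hB₂
  set B₃ : Vt n := vmk _ _ bne3 with hB₃
  set B₄ : Vt n := vmk _ _ bne4 with hB₄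
  have c1 : ((1:ℕ) : ZMod n) = 1 := Nat.cast_one
  have cd1 : ((ν+1:ℕ) : ZMod n) = ((ν:ℕ) : ZMod n) + 1 := by push_cast; ring
  have cdm1 : ((ν-1:ℕ) : ZMod n) = ((ν:ℕ) : ZMod n) - 1 := by
    push_cast [Nat.cast_sub (by omega : 1 ≤ ν)]; ring
  have cnm1 : ((n-1:ℕ) : ZMod n) = -1 := natCast_nsub_one
  have hudne : u ≠ u + ((ν:ℕ) : ZMod n) := self_ne_add u (by omega) (by omega)
  have herase1 : ({u, u + ((ν:ℕ) : ZMod n)} : Finset (ZMod n)).erase u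
      = {u + ((ν:ℕ) : ZMod n)} := by
    apply Finset.erase_insert; simp [hudne]
  have herase2 : ({u, u + ((ν:ℕ) : ZMod n)} : Finset (ZMod n)).erase (u + ((ν:ℕ) : ZMod n))
      = {u} := by
    rw [Finset.pair_comm]; apply Finset.erase_insert; simp [Ne.symm hudne]
  have hN : (tokenGraph (cycleG n) 2).neighborFinset A = {B₁, B₂, B₃, B₄} := by
    ext B
    rw [SimpleGraph.mem_neighborFinset, adj_iff]
    constructor
    · rintro ⟨x, y, hxy, hxA, hyA, hB⟩
      rw [hA] at hxA hB
      simp only [Finset.mem_insert, Finset.mem_singleton] at hxA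
      rcases (cyc_adj hn4 x y).mp hxy with rfl | rfl
      · rcases hxA with hx | hx <;> rw [hx] at hB
        · have : B = B₁ := by
            apply Subtype.ext
            rw [hB, herase1]
            show insert (u + 1) {u + ((ν:ℕ) : ZMod n)}
              = ({u + ((1:ℕ) : ZMod n), u + ((ν:ℕ) : ZMod n)} : Finset (ZMod n))
            rw [c1]
          simp [this]
        · have : B = B₃ := by
            apply Subtype.ext
            rw [hB, herase2]
            show insert (u + ((ν:ℕ) : ZMod n) + 1) {u}
              = ({u, u + ((ν+1:ℕ) : ZMod n)} : Finset (ZMod n))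
            rw [cd1, ← add_assoc]
            exact Finset.pair_comm _ _
          simp [this]
      · rcases hxA with hx | hx <;> rw [hx] at hB
        · have : B = B₂ := by
            apply Subtype.ext
            rw [hB, herase1]
            show insert (u - 1) {u + ((ν:ℕ) : ZMod n)}
              = ({u + ((n-1:ℕ) : ZMod n), u + ((ν:ℕ) : ZMod n)} : Finset (ZMod n))
            rw [sub_one_nf]
          simp [this]
        · have : B = B₄ := by
            apply Subtype.ext
            rw [hB, herase2]
            show insert (u + ((ν:ℕ) : ZMod n) - 1) {u}
              = ({u, u + ((ν-1:ℕ) : ZMod n)} : Finset (ZMod n))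
            rw [cdm1, ← add_sub_assoc]
            exact Finset.pair_comm _ _
          simp [this]
    · intro hB
      simp only [Finset.mem_insert, Finset.mem_singleton] at hB
      rcases hB with rfl | rfl | rfl | rfl
      · refine ⟨u, u + ((1:ℕ) : ZMod n), ?_, by rw [hA]; simp, ?_, ?_⟩
        · rw [cyc_adj hn4, c1]; left; rfl
        · rw [hA]
          simp only [Finset.mem_insert, Finset.mem_singleton]
          push_neg
          exact ⟨Ne.symm (self_ne_add u (by omega) (by omega)), bne1⟩
        · rw [hA, herase1]; rfl
      · refine ⟨u, u + ((n-1:ℕ) : ZMod n), ?_, by rw [hA]; simp, ?_, ?_⟩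
        · rw [cyc_adj hn4]; right; rw [sub_one_nf]
        · rw [hA]
          simp only [Finset.mem_insert, Finset.mem_singleton]
          push_neg
          exact ⟨Ne.symm (self_ne_add u (by omega) (by omega)), bne2⟩
        · rw [hA, herase1]; rfl
      · refine ⟨u + ((ν:ℕ) : ZMod n), u + ((ν+1:ℕ) : ZMod n), ?_, by rw [hA]; simp, ?_, ?_⟩
        · rw [cyc_adj hn4, cd1, ← add_assoc]; left; rfl
        · rw [hA]
          simp only [Finset.mem_insert, Finset.mem_singleton]
          push_neg
          refine ⟨Ne.symm bne3, ?_⟩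
          rw [Ne, addc_inj u (by omega) (by omega)]; omega
        · rw [hA, herase2]
          exact Finset.pair_comm _ _
      · refine ⟨u + ((ν:ℕ) : ZMod n), u + ((ν-1:ℕ) : ZMod n), ?_, by rw [hA]; simp, ?_, ?_⟩
        · rw [cyc_adj hn4, cdm1, ← add_sub_assoc]; right; rfl
        · rw [hA]
          simp only [Finset.mem_insert, Finset.mem_singleton]
          push_neg
          refine ⟨Ne.symm bne4, ?_⟩
          rw [Ne, addc_inj u (by omega) (by omega)]; omega
        · rw [hA, herase2]
          exact Finset.pair_comm _ _
  have d12 : B₁ ≠ B₂ := by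
    rw [hB₁, hB₂, Ne, vmk_eq_vmk]
    rintro (⟨h, -⟩ | ⟨h, -⟩)
    · exact absurd ((addc_inj u (by omega) (by omega)).mp h) (by omega)
    · exact absurd ((addc_inj u (by omega) (by omega)).mp h) (by omega)
  have d13 : B₁ ≠ B₃ := by
    rw [hB₁, hB₃, Ne, vmk_eq_vmk]
    rintro (⟨h, -⟩ | ⟨h, -⟩)
    · exact self_ne_add u (by omega) (by omega) h.symm
    · exact absurd ((addc_inj u (by omega) (by omega)).mp h) (by omega)
  have d14 : B₁ ≠ B₄ := by
    rw [hB₁, hB₄, Ne, vmk_eq_vmk]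
    rintro (⟨h, -⟩ | ⟨-, h⟩)
    · exact self_ne_add u (by omega) (by omega) h.symm
    · exact self_ne_add u (by omega) (by omega) h.symm
  have d23 : B₂ ≠ B₃ := by
    rw [hB₂, hB₃, Ne, vmk_eq_vmk]
    rintro (⟨h, -⟩ | ⟨-, h⟩)
    · exact self_ne_add u (by omega) (by omega) h.symm
    · exact self_ne_add u (by omega) (by omega) h.symm
  have d24 : B₂ ≠ B₄ := by
    rw [hB₂, hB₄, Ne, vmk_eq_vmk]
    rintro (⟨h, -⟩ | ⟨-, h⟩)
    · exact self_ne_add u (by omega) (by omega) h.symm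
    · exact self_ne_add u (by omega) (by omega) h.symm
  have d34 : B₃ ≠ B₄ := by
    rw [hB₃, hB₄, Ne, vmk_eq_vmk]
    rintro (⟨-, h⟩ | ⟨h, -⟩)
    · exact absurd ((addc_inj u (by omega) (by omega)).mp h) (by omega)
    · exact self_ne_add u (by omega) (by omega) h
  have dst1 : dst B₁.1 = ν - 1 := by
    show dst ({u + ((1:ℕ) : ZMod n), u + ((ν:ℕ) : ZMod n)} : Finset (ZMod n)) = ν - 1
    have h : u + ((ν:ℕ) : ZMod n) = (u + ((1:ℕ) : ZMod n)) + ((ν-1 : ℕ) : ZMod n) := by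
      rw [c1, cdm1]; ring
    rw [h, dst_add' hn _ (by omega) (by omega)]
  have dst2 : dst B₂.1 = ν - 1 := by
    show dst ({u + ((n-1:ℕ) : ZMod n), u + ((ν:ℕ) : ZMod n)} : Finset (ZMod n)) = ν - 1
    have h : u + ((ν:ℕ) : ZMod n) = (u + ((n-1:ℕ) : ZMod n)) + ((ν+1 : ℕ) : ZMod n) := by
      rw [cnm1, cd1]; ring
    rw [h, dst_add (u + ((n-1:ℕ) : ZMod n)) (by omega) (by omega : ν+1 < n)]
    omega
  have dst3 : dst B₃.1 = ν - 1 := by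
    show dst ({u, u + ((ν+1:ℕ) : ZMod n)} : Finset (ZMod n)) = ν - 1
    rw [dst_add u (by omega) (by omega : ν+1 < n)]
    omega
  have dst4 : dst B₄.1 = ν - 1 := dst_add' hn _ (by omega) (by omega)
  constructor
  · rw [← SimpleGraph.card_neighborFinset_eq_degree, hN]
    rw [Finset.card_insert_of_notMem (by simp [d12, d13, d14]),
      Finset.card_insert_of_notMem (by simp [d23, d24]),
      Finset.card_insert_of_notMem (by simp [d34]), Finset.card_singleton]
  · rw [hN]
    rw [Finset.sum_insert (by simp [d12, d13, d14]),
      Finset.sum_insert (by simp [d23, d24]),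
      Finset.sum_insert (by simp [d34]), Finset.sum_singleton]
    rw [dst1, dst2, dst3, dst4]; ring


open scoped Classical in
lemma cases_lemma [NeZero n] {ν : ℕ} (hn : n = 2*ν) (hν : 2 ≤ ν) (A : Vt n) (f : ℕ → ℝ) :
    ∃ d : ℕ, 1 ≤ d ∧ d ≤ ν ∧ dst A.1 = d ∧
      ((d = 1 ∧ (tokenGraph (cycleG n) 2).degree A = 2 ∧
          ∑ B ∈ (tokenGraph (cycleG n) 2).neighborFinset A, f (dst B.1) = 2 * f 2) ∨
       (2 ≤ d ∧ d < ν ∧ (tokenGraph (cycleG n) 2).degree A = 4 ∧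
          ∑ B ∈ (tokenGraph (cycleG n) 2).neighborFinset A, f (dst B.1)
            = 2 * f (d-1) + 2 * f (d+1)) ∨
       (d = ν ∧ (tokenGraph (cycleG n) 2).degree A = 4 ∧
          ∑ B ∈ (tokenGraph (cycleG n) 2).neighborFinset A, f (dst B.1) = 4 * f (ν-1))) := by
  obtain ⟨u, d, hd1, hdν, hA, hdst⟩ := exists_rep hn hν A
  refine ⟨d, hd1, hdν, hdst, ?_⟩
  rcases Nat.lt_or_ge d 2 with hd2 | hd2
  · have hd : d = 1 := by omega
    subst hd
    obtain ⟨hdeg, hsum⟩ := one_case hn hν u A hA f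
    exact Or.inl ⟨rfl, hdeg, hsum⟩
  · rcases Nat.lt_or_ge d ν with hdν' | hdν'
    · obtain ⟨hdeg, hsum⟩ := mid_case hn hν u hd2 hdν' A hA f
      exact Or.inr (Or.inl ⟨hd2, hdν', hdeg, hsum⟩)
    · have hd : d = ν := by omega
      subst hd
      obtain ⟨hdeg, hsum⟩ := top_case hn hν u A hA f
      exact Or.inr (Or.inr ⟨rfl, hdeg, hsum⟩)

lemma lapMat_mulVec {V' : Type*} [Fintype V'] [DecidableEq V'] (G : SimpleGraph V')
    [DecidableRel G.Adj] (x : V' → ℝ) (v : V') :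
    (lapMat G).mulVec x v = (G.degree v : ℝ) * x v - ∑ u ∈ G.neighborFinset v, x u := by
  have h : lapMat G = G.lapMatrix ℝ := by
    unfold lapMat
    congr!
  rw [h, SimpleGraph.lapMatrix_mulVec_apply]

lemma eval_charpoly' {V' : Type*} [Fintype V'] [DecidableEq V'] (M : Matrix V' V' ℝ) (μ : ℝ) :
    M.charpoly.eval μ = (μ • (1 : Matrix V' V' ℝ) - M).det := by
  rw [Matrix.charpoly, _root_.eval_det, Matrix.matPolyEquiv_charmatrix]
  congr 1
  rw [eval_sub, eval_X, eval_C]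
  congr 1
  simp [Matrix.scalar_apply, Matrix.smul_one_eq_diagonal]

lemma mem_roots_charpoly_iff {V' : Type*} [Fintype V'] [DecidableEq V']
    (M : Matrix V' V' ℝ) (μ : ℝ) :
    μ ∈ M.charpoly.roots ↔ ∃ x : V' → ℝ, x ≠ 0 ∧ M.mulVec x = μ • x := by
  rw [Polynomial.mem_roots (M.charpoly_monic.ne_zero), Polynomial.IsRoot, eval_charpoly',
    ← Matrix.exists_mulVec_eq_zero_iff]
  constructor
  · rintro ⟨x, hx, hmx⟩
    refine ⟨x, hx, ?_⟩
    rw [Matrix.sub_mulVec, Matrix.smul_mulVec, Matrix.one_mulVec, sub_eq_zero] at hmx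
    exact hmx.symm
  · rintro ⟨x, hx, hmx⟩
    refine ⟨x, hx, ?_⟩
    rw [Matrix.sub_mulVec, Matrix.smul_mulVec, Matrix.one_mulVec, sub_eq_zero, hmx]

lemma sorted_le_getLast : ∀ {l : List ℝ} (hne : l ≠ []), l.Pairwise (· ≤ ·) →
    ∀ x ∈ l, x ≤ l.getLast hne := by
  intro l
  induction l with
  | nil => intro h; simp at h
  | cons a t ih =>
    intro hne hs x hx
    cases t with
    | nil =>
      simp only [List.mem_singleton] at hx
      simp [hx, List.getLast]
    | cons b t' =>
      rw [List.getLast_cons (by simp)]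
      rcases List.mem_cons.mp hx with rfl | hxt
      · have hab : x ≤ b := (List.pairwise_cons.mp hs).1 b (by simp)
        exact hab.trans (ih (by simp) (List.pairwise_cons.mp hs).2 b (by simp))
      · exact ih (by simp) (List.pairwise_cons.mp hs).2 x hxt

lemma trig_cos2 (a : ℝ) : Real.cos (2*a) = 1 - 2 * Real.sin a ^ 2 := by
  have h := Real.cos_two_mul a
  have hpy := Real.sin_sq_add_cos_sq a
  linear_combination h + 2 * hpy

lemma trig1 (a : ℝ) :
    2 * Real.cos a - 2 * Real.cos (3*a) = (8 * Real.sin a ^ 2) * Real.cos a := by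
  have h3 := Real.cos_three_mul a
  have hpy := Real.sin_sq_add_cos_sq a
  linear_combination (-2) * h3 - 8 * Real.cos a * hpy

lemma trig2 (X a : ℝ) :
    4 * Real.cos X - (2 * Real.cos (X - 2*a) + 2 * Real.cos (X + 2*a))
      = (8 * Real.sin a ^ 2) * Real.cos X := by
  rw [Real.cos_sub, Real.cos_add, trig_cos2]
  ring

lemma trig3 (r : ℕ) (a : ℝ) :
    4 * Real.cos ((r:ℝ)*π) - 4 * Real.cos ((r:ℝ)*π - 2*a)
      = (8 * Real.sin a ^ 2) * Real.cos ((r:ℝ)*π) := by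
  rw [Real.cos_sub, Real.sin_nat_mul_pi, trig_cos2]
  ring

lemma trigw1 (b : ℝ) :
    2 * Real.sin (3*b) = ((4 + 4 * Real.cos (2*b)) - 2) * Real.sin b := by
  have h3 := Real.sin_three_mul b
  have hpy := Real.sin_sq_add_cos_sq b
  rw [trig_cos2]
  linear_combination 2 * h3

lemma trigw2 (X b : ℝ) :
    2 * Real.sin (X - 2*b) + 2 * Real.sin (X + 2*b)
      = ((4 + 4 * Real.cos (2*b)) - 4) * Real.sin X := by
  rw [Real.sin_sub, Real.sin_add]
  ring

lemma trigw3 (b : ℝ) :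
    4 * Real.sin (π/2 - 2*b) = ((4 + 4 * Real.cos (2*b)) - 4) * Real.sin (π/2) := by
  rw [Real.sin_pi_div_two_sub, Real.sin_pi_div_two]
  ring

lemma mu_eq {n : ℕ} (hn : 3 ≤ n) :
    8 * Real.sin ((((n:ℝ) - 2) / ((n:ℝ) - 1)) * (π/2)) ^ 2
      = 4 + 4 * Real.cos (2 * (π / (2 * ((n:ℝ) - 1)))) := by
  have hne : (n:ℝ) - 1 ≠ 0 := by
    have : (3:ℝ) ≤ (n:ℝ) := by exact_mod_cast hn
    linarith
  have h2t : 2 * ((((n:ℝ) - 2) / ((n:ℝ) - 1)) * (π/2)) = π - 2 * (π / (2 * ((n:ℝ) - 1))) := by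
    field_simp
    ring
  have := trig_cos2 ((((n:ℝ) - 2) / ((n:ℝ) - 1)) * (π/2))
  rw [h2t, Real.cos_pi_sub] at this
  linarith

/-- a base vertex of distance 1 -/
def A0 (n : ℕ) [NeZero n] (hn4 : 4 ≤ n) : Vt n :=
  vmk (0 : ZMod n) ((0 : ZMod n) + ((1:ℕ) : ZMod n)) (self_ne_add _ (by omega) (by omega))

lemma dst_A0 {ν : ℕ} [NeZero n] (hn : n = 2*ν) (hν : 2 ≤ ν) (hn4 : 4 ≤ n) :
    dst (A0 n hn4).1 = 1 := dst_add' hn _ (by omega) (by omega)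

open scoped Classical in
lemma eigen_part [NeZero n] {ν : ℕ} (hn : n = 2*ν) (hν : 2 ≤ ν) (r : ℕ) (hr : r < ν) :
    ∃ x : Vt n → ℝ, x ≠ 0 ∧
      (lapMat (tokenGraph (cycleG n) 2)).mulVec x
        = (8 * Real.sin ((r:ℝ) * π / ((n:ℝ) - 1)) ^ 2) • x := by
  have hn4 : 4 ≤ n := by omega
  set a : ℝ := (r:ℝ) * π / ((n:ℝ) - 1) with ha
  set lam : ℝ := 8 * Real.sin a ^ 2 with hlam
  have hcast : (n:ℝ) - 1 = 2*(ν:ℝ) - 1 := by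
    rw [hn]; push_cast; ring
  have hν1 : (1:ℝ) ≤ (ν:ℝ) := by exact_mod_cast (by omega : 1 ≤ ν)
  have hden : (0:ℝ) < (n:ℝ) - 1 := by rw [hcast]; linarith
  set f : ℕ → ℝ := fun d => Real.cos ((2*(d:ℝ) - 1) * a) with hf
  set x : Vt n → ℝ := fun A => f (dst A.1) with hx
  have hcosa : 0 < Real.cos a := by
    apply Real.cos_pos_of_mem_Ioo
    constructor
    · have : 0 ≤ a := by
        apply div_nonneg _ (le_of_lt hden)
        positivity
      linarith [Real.pi_pos]
    · rw [ha, hcast, div_lt_iff₀ (by linarith)]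
      have : (r:ℝ) ≤ (ν:ℝ) - 1 := by
        have : (r:ℝ) + 1 ≤ (ν:ℝ) := by exact_mod_cast hr
        linarith
      nlinarith [Real.pi_pos]
  have hf1 : f 1 = Real.cos a := by
    show Real.cos ((2*((1:ℕ):ℝ) - 1) * a) = Real.cos a
    norm_num
  refine ⟨x, ?_, ?_⟩
  · intro h
    have h0 := congrFun h (A0 n hn4)
    rw [hx] at h0
    simp only [Pi.zero_apply] at h0
    rw [dst_A0 hn hν hn4, hf1] at h0
    linarith
  · funext A
    rw [Pi.smul_apply, smul_eq_mul]
    obtain ⟨d, hd1, hdν, hdst, hcase⟩ := cases_lemma hn hν A f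
    have hxA : x A = f d := by show f (dst A.1) = f d; rw [hdst]
    rw [lapMat_mulVec]
    rcases hcase with ⟨hd, hdeg, hsum⟩ | ⟨hd2, hdlt, hdeg, hsum⟩ | ⟨hd, hdeg, hsum⟩
    · subst hd
      have hsum' : ∑ B ∈ (tokenGraph (cycleG n) 2).neighborFinset A, x B = 2 * f 2 := hsum
      rw [hdeg, hsum', hxA, hf1]
      have hf2 : f 2 = Real.cos (3*a) := by
        show Real.cos ((2*((2:ℕ):ℝ) - 1) * a) = Real.cos (3*a)
        norm_num
      rw [hf2]
      push_cast
      linear_combination trig1 a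
    · have hsum' : ∑ B ∈ (tokenGraph (cycleG n) 2).neighborFinset A, x B
          = 2 * f (d-1) + 2 * f (d+1) := hsum
      rw [hdeg, hsum', hxA]
      set X : ℝ := (2*(d:ℝ) - 1) * a with hX
      have hfd : f d = Real.cos X := rfl
      have hfm : f (d-1) = Real.cos (X - 2*a) := by
        show Real.cos ((2*((d-1:ℕ):ℝ) - 1) * a) = Real.cos (X - 2*a)
        congr 1
        push_cast [Nat.cast_sub (by omega : 1 ≤ d)]
        ring
      have hfp : f (d+1) = Real.cos (X + 2*a) := by
        show Real.cos ((2*((d+1:ℕ):ℝ) - 1) * a) = Real.cos (X + 2*a)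
        congr 1
        push_cast
        ring
      rw [hfd, hfm, hfp]
      push_cast
      linear_combination trig2 X a
    · rw [hd] at hxA
      have hsum' : ∑ B ∈ (tokenGraph (cycleG n) 2).neighborFinset A, x B
          = 4 * f (ν-1) := hsum
      rw [hdeg, hsum', hxA]
      have hfν : f ν = Real.cos ((r:ℝ)*π) := by
        show Real.cos ((2*((ν:ℕ):ℝ) - 1) * a) = Real.cos ((r:ℝ)*π)
        congr 1
        rw [ha, hcast]
        have h2ν : (2*(ν:ℝ) - 1) ≠ 0 := by linarith
        field_simp
        try ring
      have hfm : f (ν-1) = Real.cos ((r:ℝ)*π - 2*a) := by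
        show Real.cos ((2*((ν-1:ℕ):ℝ) - 1) * a) = Real.cos ((r:ℝ)*π - 2*a)
        congr 1
        rw [ha, hcast]
        have h2ν : (2*(ν:ℝ) - 1) ≠ 0 := by linarith
        push_cast [Nat.cast_sub (by omega : 1 ≤ ν)]
        field_simp
        try ring
      rw [hfν, hfm]
      push_cast
      linear_combination trig3 r a

open scoped Classical in
lemma bound_part [NeZero n] {ν : ℕ} (hn : n = 2*ν) (hν : 2 ≤ ν) {lam : ℝ}
    (hlam : ∃ x : Vt n → ℝ, x ≠ 0 ∧
      (lapMat (tokenGraph (cycleG n) 2)).mulVec x = lam • x) :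
    lam ≤ 4 + 4 * Real.cos (2 * (π / (2 * ((n:ℝ) - 1)))) := by
  obtain ⟨x, hx0, hxe⟩ := hlam
  have hn4 : 4 ≤ n := by omega
  have hcast : (n:ℝ) - 1 = 2*(ν:ℝ) - 1 := by
    rw [hn]; push_cast; ring
  have hν1 : (1:ℝ) ≤ (ν:ℝ) := by exact_mod_cast (by omega : 1 ≤ ν)
  set b : ℝ := π / (2 * ((n:ℝ) - 1)) with hb
  set μ : ℝ := 4 + 4 * Real.cos (2*b) with hμ
  have hb0 : 0 < b := by
    rw [hb, hcast]
    apply div_pos Real.pi_pos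
    linarith
  have hbν : (2*(ν:ℝ) - 1) * b = π / 2 := by
    rw [hb, hcast]
    have h2ν : (2*(ν:ℝ) - 1) ≠ 0 := by linarith
    field_simp
  set g : ℕ → ℝ := fun d => Real.sin ((2*(d:ℝ) - 1) * b) with hg
  set w : Vt n → ℝ := fun A => g (dst A.1) with hw
  -- positivity of g on [1, ν]
  have hgpos : ∀ d : ℕ, 1 ≤ d → d ≤ ν → 0 < g d := by
    intro d h1 h2
    apply Real.sin_pos_of_pos_of_lt_pi
    · apply mul_pos _ hb0
      have : (1:ℝ) ≤ (d:ℝ) := by exact_mod_cast h1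
      linarith
    · have hdν : (d:ℝ) ≤ (ν:ℝ) := by exact_mod_cast h2
      have h1 : (2*(d:ℝ) - 1) * b ≤ π/2 := by
        rw [← hbν]
        apply mul_le_mul_of_nonneg_right _ (le_of_lt hb0)
        linarith
      linarith [Real.pi_pos]
  -- w positive
  have hwpos : ∀ A : Vt n, 0 < w A := by
    intro A
    obtain ⟨d, hd1, hdν, hdst, -⟩ := cases_lemma hn hν A g
    rw [hw]
    simp only
    rw [hdst]
    exact hgpos d hd1 hdν
  -- the key eigen-equation for w
  have hweq : ∀ A : Vt n,
      ∑ B ∈ (tokenGraph (cycleG n) 2).neighborFinset A, w B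
        = (μ - ((tokenGraph (cycleG n) 2).degree A : ℝ)) * w A := by
    intro A
    obtain ⟨d, hd1, hdν, hdst, hcase⟩ := cases_lemma hn hν A g
    have hwA : w A = g d := by rw [hw]; simp only; rw [hdst]
    have hsum_eq : ∑ B ∈ (tokenGraph (cycleG n) 2).neighborFinset A, w B
        = ∑ B ∈ (tokenGraph (cycleG n) 2).neighborFinset A, g (dst B.1) := rfl
    rcases hcase with ⟨hd, hdeg, hsum⟩ | ⟨hd2, hdlt, hdeg, hsum⟩ | ⟨hd, hdeg, hsum⟩
    · subst hd
      rw [hsum_eq, hsum, hdeg, hwA]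
      have hg1 : g 1 = Real.sin b := by
        show Real.sin ((2*((1:ℕ):ℝ) - 1) * b) = Real.sin b
        norm_num
      have hg2 : g 2 = Real.sin (3*b) := by
        show Real.sin ((2*((2:ℕ):ℝ) - 1) * b) = Real.sin (3*b)
        norm_num
      rw [hg1, hg2]
      push_cast
      linear_combination trigw1 b
    · rw [hsum_eq, hsum, hdeg, hwA]
      set X : ℝ := (2*(d:ℝ) - 1) * b with hX
      have hgd : g d = Real.sin X := rfl
      have hgm : g (d-1) = Real.sin (X - 2*b) := by
        show Real.sin ((2*((d-1:ℕ):ℝ) - 1) * b) = Real.sin (X - 2*b)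
        congr 1
        push_cast [Nat.cast_sub (by omega : 1 ≤ d)]
        ring
      have hgp : g (d+1) = Real.sin (X + 2*b) := by
        show Real.sin ((2*((d+1:ℕ):ℝ) - 1) * b) = Real.sin (X + 2*b)
        congr 1
        push_cast
        ring
      rw [hgd, hgm, hgp]
      push_cast
      linear_combination trigw2 X b
    · rw [hd] at hwA
      rw [hsum_eq, hsum, hdeg, hwA]
      have hgν : g ν = Real.sin (π/2) := by
        show Real.sin ((2*((ν:ℕ):ℝ) - 1) * b) = Real.sin (π/2)
        rw [hbν]
      have hgm : g (ν-1) = Real.sin (π/2 - 2*b) := by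
        show Real.sin ((2*((ν-1:ℕ):ℝ) - 1) * b) = Real.sin (π/2 - 2*b)
        congr 1
        rw [← hbν]
        push_cast [Nat.cast_sub (by omega : 1 ≤ ν)]
        ring
      rw [hgν, hgm]
      push_cast
      linear_combination trigw3 b
  -- choose a maximizer of |x|/w
  obtain ⟨u, -, hu⟩ := Finset.exists_max_image (Finset.univ : Finset (Vt n))
    (fun A => |x A| / w A) ⟨A0 n hn4, Finset.mem_univ _⟩
  have hu' : ∀ B : Vt n, |x B| / w B ≤ |x u| / w u := fun B => hu B (Finset.mem_univ B)
  have hxu : x u ≠ 0 := by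
    intro h0
    apply hx0
    funext B
    have h1 : |x B| / w B ≤ 0 := by
      have := hu' B
      rwa [h0, abs_zero, zero_div] at this
    have h2 : 0 ≤ |x B| / w B := div_nonneg (abs_nonneg _) (le_of_lt (hwpos B))
    have h3 : |x B| / w B = 0 := le_antisymm h1 h2
    rw [_root_.div_eq_zero_iff] at h3
    rcases h3 with h3 | h3
    · simpa using abs_eq_zero.mp h3
    · exact absurd h3 (ne_of_gt (hwpos B))
  -- eigen equation at u
  have he : (lapMat (tokenGraph (cycleG n) 2)).mulVec x u = lam * x u := by
    rw [hxe]; rfl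
  rw [lapMat_mulVec] at he
  set D : ℝ := ((tokenGraph (cycleG n) 2).degree u : ℝ) with hD
  set S : ℝ := ∑ B ∈ (tokenGraph (cycleG n) 2).neighborFinset u, x B with hS
  have key : |lam - D| * |x u| ≤ (μ - D) * |x u| := by
    have h1 : (lam - D) * x u = -S := by linear_combination -he
    have h2 : |S| ≤ (μ - D) * |x u| := by
      calc |S| ≤ ∑ B ∈ (tokenGraph (cycleG n) 2).neighborFinset u, |x B| :=
            Finset.abs_sum_le_sum_abs _ _
        _ ≤ ∑ B ∈ (tokenGraph (cycleG n) 2).neighborFinset u, (|x u| / w u) * w B := by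
            apply Finset.sum_le_sum
            intro B _
            have h3 : |x B| / w B ≤ |x u| / w u := hu' B
            calc |x B| = (|x B| / w B) * w B := by
                  field_simp [ne_of_gt (hwpos B)]
              _ ≤ (|x u| / w u) * w B :=
                  mul_le_mul_of_nonneg_right h3 (le_of_lt (hwpos B))
        _ = (|x u| / w u) * ∑ B ∈ (tokenGraph (cycleG n) 2).neighborFinset u, w B := by
            rw [Finset.mul_sum]
        _ = (|x u| / w u) * ((μ - D) * w u) := by rw [hweq u]
        _ = (μ - D) * |x u| := by
            field_simp [ne_of_gt (hwpos u)]
    calc |lam - D| * |x u| = |(lam - D) * x u| := by rw [abs_mul]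
      _ = |S| := by rw [h1, abs_neg]
      _ ≤ (μ - D) * |x u| := h2
  have hxu' : 0 < |x u| := abs_pos.mpr hxu
  have h4 : |lam - D| ≤ μ - D := le_of_mul_le_mul_right (by linarith [key]) hxu'
  have h5 : lam - D ≤ |lam - D| := le_abs_self _
  linarith

end Stmt14

noncomputable section

theorem stmt_14 {n ν : ℕ} [NeZero n] (hν : 2 ≤ ν) (hn : n = 2 * ν) :
    (∀ r : ℕ, r < ν →
        IsLapEigen (tokenGraph (cycleG n) 2) (8 * Real.sin ((r : ℝ) * π / ((n : ℝ) - 1)) ^ 2)) ∧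
      8 * Real.sin ((0 : ℝ) * π / ((n : ℝ) - 1)) ^ 2 = 0 ∧
      lapSpecRadius (tokenGraph (cycleG n) 2) =
        8 * Real.sin ((((n : ℝ) - 2) / ((n : ℝ) - 1)) * (π / 2)) ^ 2 := by
  have hn2ν : n = 2 * ν := hn
  have hn4 : 4 ≤ n := by omega
  have hcast : (n:ℝ) - 1 = 2*(ν:ℝ) - 1 := by rw [hn]; push_cast; ring
  refine ⟨fun r hr => Stmt14.eigen_part hn hν r hr, by norm_num, ?_⟩
  set T := tokenGraph (cycleG n) 2 with hT
  set target : ℝ := 8 * Real.sin ((((n:ℝ)-2)/((n:ℝ)-1)) * (π/2))^2 with htarget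
  have hμeq : target = 4 + 4*Real.cos (2*(π/(2*((n:ℝ)-1)))) := Stmt14.mu_eq (by omega)
  have heig : ∃ x : Stmt14.Vt n → ℝ, x ≠ 0 ∧ (lapMat T).mulVec x = target • x := by
    have h := Stmt14.eigen_part hn hν (ν-1) (by omega)
    have hne : (n:ℝ) - 1 ≠ 0 := by
      rw [hcast]
      have : (2:ℝ) ≤ (ν:ℝ) := by exact_mod_cast hν
      linarith
    have harg : ((ν-1 : ℕ):ℝ) * π / ((n:ℝ)-1) = (((n:ℝ)-2)/((n:ℝ)-1)) * (π/2) := by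
      rw [hcast] at hne ⊢
      rw [hn]
      push_cast [Nat.cast_sub (by omega : 1 ≤ ν)]
      field_simp
    rw [harg] at h
    exact h
  have htm : target ∈ (lapMat T).charpoly.roots :=
    (Stmt14.mem_roots_charpoly_iff _ _).mpr heig
  have hmem : target ∈ lapSpec T := by
    unfold lapSpec
    exact (Multiset.mem_sort _).mpr htm
  have hnil : lapSpec T ≠ [] := List.ne_nil_of_mem hmem
  have hsorted : (lapSpec T).Pairwise (· ≤ ·) := by
    unfold lapSpec
    exact Multiset.pairwise_sort _ _
  have hlast : lapSpecRadius T = (lapSpec T).getLast hnil := by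
    unfold lapSpecRadius
    rw [List.getLastD_eq_getLast?, List.getLast?_eq_getLast hnil, Option.getD_some]
  have h1 : target ≤ (lapSpec T).getLast hnil :=
    Stmt14.sorted_le_getLast hnil hsorted _ hmem
  have h2 : (lapSpec T).getLast hnil ≤ target := by
    have hmem' : (lapSpec T).getLast hnil ∈ lapSpec T := List.getLast_mem hnil
    have hroot : (lapSpec T).getLast hnil ∈ (lapMat T).charpoly.roots := by
      unfold lapSpec at hmem'
      exact (Multiset.mem_sort _).mp hmem'
    have heg := (Stmt14.mem_roots_charpoly_iff _ _).mp hroot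
    rw [hμeq]
    exact Stmt14.bound_part hn hν heg
  rw [hlast]
  linarith

end
end

section
/- Let n = 2ν+1 with ν ≥ 2, and let B*(0) be the ν×ν real tridiagonal matrix with diagonal entries (2, 4, 4, …, 4, 2) and all sub- and superdiagonal entries equal to 2. Then the multiset of eigenvalues of B*(0) is exactly {8 cos²(sπ/(2ν)) : s = 1, 2, …, ν}; in particular the eigenvalue for s = ν is 0, and the smallest nonzero eigenvalue 8 cos²((ν−1)π/(2ν)) is strictly greater than 4 sin²(π/(2ν+1)), the algebraic connectivity of the cycle C_{2ν+1}. -/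
open Finset Polynomial Real Matrix

noncomputable section

/-- The `ν × ν` real symmetric tridiagonal matrix `B*(0)`: diagonal entries `(2, 4, …, 4, 2)`
and all sub- and superdiagonal entries equal to `2`. -/
def Bstar0 (ν : ℕ) : Matrix (Fin ν) (Fin ν) ℝ :=
  fun i j =>
    if i = j then (if (i : ℕ) = 0 ∨ (i : ℕ) = ν - 1 then 2 else 4)
    else if (j : ℕ) = (i : ℕ) + 1 ∨ (i : ℕ) = (j : ℕ) + 1 then 2
    else 0

end

noncomputable section
open Real

lemma bstar_decomp {ν : ℕ} (i j : Fin ν) :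
    Bstar0 ν i j = (if j = i then (if (i:ℕ)=0 ∨ (i:ℕ)=ν-1 then (2:ℝ) else 4) else 0)
      + (if (j:ℕ) = (i:ℕ)+1 then 2 else 0) + (if (i:ℕ) = (j:ℕ)+1 then 2 else 0) := by
  unfold Bstar0
  simp only [Fin.ext_iff]
  split_ifs <;> first | (exfalso; omega) | ring

lemma mulVec_bstar {ν : ℕ} (v : Fin ν → ℝ) (i : Fin ν) :
    (Bstar0 ν).mulVec v i =
      (if (i:ℕ)=0 ∨ (i:ℕ)=ν-1 then 2 else 4) * v i
      + (if h : (i:ℕ)+1 < ν then 2 * v ⟨(i:ℕ)+1, h⟩ else 0)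
      + (if h : 0 < (i:ℕ) then 2 * v ⟨(i:ℕ)-1, lt_trans (Nat.sub_lt h one_pos) i.isLt⟩ else 0) := by
  unfold Matrix.mulVec dotProduct
  simp only [bstar_decomp, add_mul, Finset.sum_add_distrib]
  congr 1
  · congr 1
    · -- diagonal
      simp only [ite_mul, zero_mul, Finset.sum_ite_eq', Finset.mem_univ, if_true]
    · -- superdiagonal
      by_cases h : (i:ℕ)+1 < ν
      · rw [dif_pos h]
        rw [Finset.sum_eq_single (⟨(i:ℕ)+1, h⟩ : Fin ν)]
        · simp
        · intro b _ hb
          rw [if_neg, zero_mul]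
          simpa [Fin.ext_iff] using hb
        · simp
      · rw [dif_neg h]
        apply Finset.sum_eq_zero
        intro b _
        rw [if_neg, zero_mul]
        have := b.isLt; omega
  · -- subdiagonal
    by_cases h : 0 < (i:ℕ)
    · rw [dif_pos h]
      rw [Finset.sum_eq_single (⟨(i:ℕ)-1, lt_trans (Nat.sub_lt h one_pos) i.isLt⟩ : Fin ν)]
      · simp only [Fin.val_mk]
        rw [if_pos (by omega)]
      · intro b _ hb
        rw [if_neg, zero_mul]
        simp only [ne_eq, Fin.ext_iff, Fin.val_mk] at hb
        omega
      · exact fun h => absurd (Finset.mem_univ _) h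
    · rw [dif_neg h]
      apply Finset.sum_eq_zero
      intro b _
      rw [if_neg, zero_mul]
      omega

end

noncomputable section
lemma trig_int (A xx : ℝ) :
    4 * Real.sin A + 2 * Real.sin (A + 2*xx) + 2 * Real.sin (A - 2*xx)
      = 8 * Real.cos xx ^ 2 * Real.sin A := by
  rw [Real.sin_add, Real.sin_sub, Real.cos_two_mul]; ring

lemma trig_bd (xx : ℝ) :
    2 * Real.sin xx + 2 * Real.sin (3*xx) = 8 * Real.cos xx ^ 2 * Real.sin xx := by
  rw [show (3:ℝ)*xx = xx + 2*xx by ring, Real.sin_add, Real.cos_two_mul, Real.sin_two_mul]; ring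

lemma charpoly_eval {m : ℕ} (M : Matrix (Fin m) (Fin m) ℝ) (t : ℝ) :
    M.charpoly.eval t = (t • (1 : Matrix (Fin m) (Fin m) ℝ) - M).det := by
  rw [Matrix.charpoly, ← Polynomial.coe_evalRingHom, RingHom.map_det]
  congr 1
  ext i j
  by_cases h : i = j <;>
    simp [h, Matrix.charmatrix_apply, Matrix.one_apply, Matrix.diagonal_apply,
      Matrix.smul_apply, Matrix.sub_apply, smul_eq_mul]

lemma root_of_eigen {m : ℕ} (M : Matrix (Fin m) (Fin m) ℝ) (t : ℝ) (v : Fin m → ℝ)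
    (hv : v ≠ 0) (h : M.mulVec v = t • v) : t ∈ M.charpoly.roots := by
  rw [Polynomial.mem_roots (M.charpoly_monic.ne_zero)]
  show M.charpoly.eval t = 0
  rw [charpoly_eval]
  rw [← Matrix.exists_mulVec_eq_zero_iff]
  exact ⟨v, hv, by rw [Matrix.sub_mulVec, Matrix.smul_mulVec, Matrix.one_mulVec, h, sub_self]⟩
end


noncomputable section
open Real

lemma eigen_mem {ν : ℕ} (hν : 2 ≤ ν) {s : ℕ} (hs1 : 1 ≤ s) (hs2 : s ≤ ν) :
    (8 * Real.cos ((s:ℝ) * π / (2 * (ν:ℝ))) ^ 2) ∈ (Bstar0 ν).charpoly.roots := by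
  have hν0 : (0:ℝ) < (ν:ℝ) := by exact_mod_cast (by omega : 0 < ν)
  have hs0 : (0:ℝ) < (s:ℝ) := by exact_mod_cast hs1
  set x : ℝ := (s:ℝ) * π / (2 * (ν:ℝ)) with hxdef
  have hx0 : 0 < x := div_pos (mul_pos hs0 pi_pos) (by linarith)
  have hxle : x ≤ π / 2 := by
    rw [hxdef, div_le_iff₀ (by linarith)]
    have hsν : (s:ℝ) ≤ (ν:ℝ) := by exact_mod_cast hs2
    nlinarith [pi_pos]
  have h2νx : 2 * (ν:ℝ) * x = (s:ℝ) * π := by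
    rw [hxdef]; field_simp
  apply root_of_eigen _ _ (fun i : Fin ν => Real.sin ((2 * ((i:ℕ):ℝ) + 1) * x))
  · intro h
    have h0 : Real.sin ((2 * (((⟨0, by omega⟩ : Fin ν):ℕ):ℝ) + 1) * x) = 0 := congrFun h _
    simp only [Fin.val_mk, Nat.cast_zero] at h0
    rw [show (2 * (0:ℝ) + 1) * x = x by ring] at h0
    exact absurd h0 (ne_of_gt (Real.sin_pos_of_pos_of_lt_pi hx0 (by linarith [pi_pos])))
  · funext i
    rw [mulVec_bstar]
    simp only [Pi.smul_apply, smul_eq_mul]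
    by_cases hl : (i:ℕ) = ν - 1
    · have hk0 : 0 < (i:ℕ) := by omega
      rw [if_pos (Or.inr hl), dif_neg (by omega), dif_pos hk0]
      have hcast : ((i:ℕ):ℝ) = (ν:ℝ) - 1 := by
        rw [hl]; push_cast [Nat.cast_sub (by omega : 1 ≤ ν)]; ring
      have hcast2 : ((((i:ℕ) - 1 : ℕ)):ℝ) = (ν:ℝ) - 2 := by
        rw [hl, show ν - 1 - 1 = ν - 2 from by omega,
          Nat.cast_sub (by omega : 2 ≤ ν)]; norm_num
      rw [show (2 * ((i:ℕ):ℝ) + 1) * x = (s:ℝ) * π - x by rw [hcast]; linear_combination h2νx,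
        show (2 * ((((i:ℕ) - 1 : ℕ)):ℝ) + 1) * x = (s:ℝ) * π - 3 * x by
          rw [hcast2]; linear_combination h2νx,
        Real.sin_sub, Real.sin_sub, Real.sin_nat_mul_pi]
      linear_combination (-(Real.cos ((s:ℝ) * π))) * trig_bd x

    · by_cases h0 : (i:ℕ) = 0
      · rw [if_pos (Or.inl h0), dif_pos (by omega : (i:ℕ) + 1 < ν), dif_neg (by omega)]
        rw [show (2 * ((i:ℕ):ℝ) + 1) * x = x by rw [h0]; push_cast; ring,
          show (2 * ((((i:ℕ) + 1 : ℕ)):ℝ) + 1) * x = 3 * x by rw [h0]; push_cast; ring]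
        linear_combination trig_bd x
      · rw [if_neg (by omega), dif_pos (by omega : (i:ℕ) + 1 < ν), dif_pos (by omega)]
        rw [show (2 * ((((i:ℕ) + 1 : ℕ)):ℝ) + 1) * x
              = (2 * ((i:ℕ):ℝ) + 1) * x + 2 * x by push_cast; ring,
          show (2 * ((((i:ℕ) - 1 : ℕ)):ℝ) + 1) * x
              = (2 * ((i:ℕ):ℝ) + 1) * x - 2 * x by
            push_cast [Nat.cast_sub (by omega : 1 ≤ (i:ℕ))]; ring]
        linear_combination trig_int ((2 * ((i:ℕ):ℝ) + 1) * x) x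

lemma eigen_inj {ν : ℕ} (hν : 2 ≤ ν) :
    ∀ s ∈ Finset.Icc 1 ν, ∀ t ∈ Finset.Icc 1 ν,
      (8 * Real.cos ((s:ℝ) * π / (2 * (ν:ℝ))) ^ 2)
        = (8 * Real.cos ((t:ℝ) * π / (2 * (ν:ℝ))) ^ 2) → s = t := by
  have hν0 : (0:ℝ) < (ν:ℝ) := by exact_mod_cast (by omega : 0 < ν)
  have key : ∀ s ∈ Finset.Icc 1 ν, (s:ℝ) * π / (2 * (ν:ℝ)) ∈ Set.Icc 0 (π/2) := by
    intro s hs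
    simp only [Finset.mem_Icc] at hs
    have hs0 : (0:ℝ) < (s:ℝ) := by exact_mod_cast hs.1
    have hsν : (s:ℝ) ≤ (ν:ℝ) := by exact_mod_cast hs.2
    constructor
    · positivity
    · rw [div_le_iff₀ (by linarith)]; nlinarith [pi_pos]
  intro s hs t ht h
  have h8 : Real.cos ((s:ℝ) * π / (2 * (ν:ℝ))) ^ 2
      = Real.cos ((t:ℝ) * π / (2 * (ν:ℝ))) ^ 2 := by linarith
  have hcs := Real.cos_nonneg_of_mem_Icc
    (Set.Icc_subset_Icc (by linarith [pi_pos]) le_rfl (key s hs))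
  have hct := Real.cos_nonneg_of_mem_Icc
    (Set.Icc_subset_Icc (by linarith [pi_pos]) le_rfl (key t ht))
  have hcc : Real.cos ((s:ℝ) * π / (2 * (ν:ℝ))) = Real.cos ((t:ℝ) * π / (2 * (ν:ℝ))) :=
    (sq_eq_sq₀ hcs hct).mp h8
  have harg : (s:ℝ) * π / (2 * (ν:ℝ)) = (t:ℝ) * π / (2 * (ν:ℝ)) := by
    refine Real.strictAntiOn_cos.injOn ?_ ?_ hcc
    · exact Set.Icc_subset_Icc le_rfl (by linarith [pi_pos]) (key s hs)
    · exact Set.Icc_subset_Icc le_rfl (by linarith [pi_pos]) (key t ht)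
  field_simp at harg
  exact_mod_cast (by linarith : (s:ℝ) = t)
end

noncomputable section

theorem stmt_17 {ν : ℕ} (hν : 2 ≤ ν) :
    (Bstar0 ν).charpoly.roots =
        (Finset.Icc 1 ν).val.map (fun s : ℕ => 8 * Real.cos ((s : ℝ) * π / (2 * (ν : ℝ))) ^ 2) ∧
      8 * Real.cos ((ν : ℝ) * π / (2 * (ν : ℝ))) ^ 2 = 0 ∧
      4 * Real.sin (π / (2 * (ν : ℝ) + 1)) ^ 2 <
        8 * Real.cos (((ν : ℝ) - 1) * π / (2 * (ν : ℝ))) ^ 2 := by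
  have hν0 : (0:ℝ) < (ν:ℝ) := by exact_mod_cast (by omega : 0 < ν)
  refine ⟨?_, ?_, ?_⟩
  · have hnd : (((Finset.Icc 1 ν).val.map
        (fun s : ℕ => 8 * Real.cos ((s : ℝ) * π / (2 * (ν : ℝ))) ^ 2))).Nodup :=
      Multiset.Nodup.map_on
        (fun s hs t ht => eigen_inj hν s (Finset.mem_val.mp hs) t (Finset.mem_val.mp ht))
        (Finset.Icc 1 ν).nodup
    have hmem : ∀ a ∈ (Finset.Icc 1 ν).val.map
        (fun s : ℕ => 8 * Real.cos ((s : ℝ) * π / (2 * (ν : ℝ))) ^ 2),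
        a ∈ (Bstar0 ν).charpoly.roots := by
      intro a ha
      obtain ⟨s, hs, rfl⟩ := Multiset.mem_map.mp ha
      rw [Finset.mem_val, Finset.mem_Icc] at hs
      exact eigen_mem hν hs.1 hs.2
    have hle : (Finset.Icc 1 ν).val.map
        (fun s : ℕ => 8 * Real.cos ((s : ℝ) * π / (2 * (ν : ℝ))) ^ 2)
          ≤ (Bstar0 ν).charpoly.roots := by
      rw [Multiset.le_iff_count]
      intro a
      by_cases ha : a ∈ (Finset.Icc 1 ν).val.map
        (fun s : ℕ => 8 * Real.cos ((s : ℝ) * π / (2 * (ν : ℝ))) ^ 2)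
      · rw [Multiset.count_eq_one_of_mem hnd ha]
        exact Multiset.one_le_count_iff_mem.mpr (hmem a ha)
      · rw [Multiset.count_eq_zero_of_notMem ha]; exact Nat.zero_le _
    refine (Multiset.eq_of_le_of_card_le hle ?_).symm
    rw [Multiset.card_map]
    have h1 : Multiset.card (Finset.Icc 1 ν).val = ν := by
      have : (Finset.Icc 1 ν).card = ν := by rw [Nat.card_Icc]; omega
      exact this
    rw [h1]
    calc Multiset.card (Bstar0 ν).charpoly.roots ≤ (Bstar0 ν).charpoly.natDegree :=
          Polynomial.card_roots' _
      _ = ν := by rw [Matrix.charpoly_natDegree_eq_dim, Fintype.card_fin]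
  · rw [show (ν:ℝ) * π / (2 * (ν:ℝ)) = π / 2 by field_simp, Real.cos_pi_div_two]
    ring
  · rw [show ((ν:ℝ) - 1) * π / (2 * (ν:ℝ)) = π / 2 - π / (2 * (ν:ℝ)) by field_simp,
      Real.cos_pi_div_two_sub]
    have ha : 0 < π / (2 * (ν:ℝ) + 1) := by positivity
    have hb : π / (2 * (ν:ℝ) + 1) < π / (2 * (ν:ℝ)) :=
      div_lt_div_of_pos_left pi_pos (by linarith) (by linarith)
    have hb2 : π / (2 * (ν:ℝ)) ≤ π / 2 := by
      gcongr
      · have h1ν : (1:ℝ) ≤ (ν:ℝ) := by exact_mod_cast (by omega : 1 ≤ ν)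
        linarith
    have hsin : Real.sin (π / (2 * (ν:ℝ) + 1)) < Real.sin (π / (2 * (ν:ℝ))) :=
      Real.strictMonoOn_sin ⟨by linarith [pi_pos], by linarith⟩
        ⟨by linarith [pi_pos], by linarith⟩ hb
    have hpos : 0 < Real.sin (π / (2 * (ν:ℝ) + 1)) :=
      Real.sin_pos_of_pos_of_lt_pi ha (by linarith [pi_pos])
    nlinarith [hsin, hpos]

end
end
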